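/- arXiv:2110.09210 — 7 statements merged into one kernel-verified Lean document; each statement's English description precedes it below -/
import Mathlib

section
/- Let Φ satisfy Φ = 0 on (-∞,0], Φ = 1 on [θ₂,∞), Φ nondecreasing, Φ(θ₁) > 0, with 0 < θ₁ < θ₂. Then the function v: ℝ → ℝ implicitly defined by ∫_{θ₁}^{v(x)} dw/√(Φ(w)) = x is a positive, increasing, convex solution of v'' = (1/2)Φ'(v) with v(0) = θ₁, v'(x) → 1 as x → +∞, and v(x) → 0 as x → −∞. -/
open Real Set Filter intervalIntegral Topology

/-- the function v implicitly defined by ∫_{θ₁}^{v(x)} dw/√Φ(w) = x is a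
positive, increasing, convex solution of v'' = (1/2)Φ'(v) with v(0) = θ₁,
v'(x) → 1 as x → +∞ and v(x) → 0 as x → −∞. -/
theorem statement2
    (Φ : ℝ → ℝ) (θ₁ θ₂ c₁ : ℝ)
    (hθ₁ : 0 < θ₁) (hθ₁₂ : θ₁ < θ₂) (hc₁ : 0 < c₁)
    (hΦreg : ContDiff ℝ 1 Φ)
    (hΦ0 : ∀ t ≤ (0:ℝ), Φ t = 0)
    (hΦ1 : ∀ t, θ₂ ≤ t → Φ t = 1)
    (hΦmono : Monotone Φ)
    (hΦθ₁ : 0 < Φ θ₁)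
    (hΦ' : ∀ s ∈ Icc (0:ℝ) θ₁,
        (1/c₁) * s ≤ (1/2) * deriv Φ s ∧ (1/2) * deriv Φ s ≤ c₁ * s)
    (v : ℝ → ℝ) (hvcont : Continuous v)
    (hvimp : ∀ x : ℝ, ∫ w in θ₁..(v x), (Real.sqrt (Φ w))⁻¹ = x) :
    (∀ x, 0 < v x) ∧ StrictMono v ∧ ConvexOn ℝ univ v ∧
      (∀ x, deriv (deriv v) x = (1/2) * deriv Φ (v x)) ∧
      v 0 = θ₁ ∧
      Tendsto (deriv v) atTop (nhds 1) ∧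
      Tendsto v atBot (nhds 0) := by
  set g : ℝ → ℝ := fun w => (Real.sqrt (Φ w))⁻¹ with hgdef
  set F : ℝ → ℝ := fun t => ∫ w in θ₁..t, g w with hFdef
  have hFv : ∀ x : ℝ, F (v x) = x := hvimp
  have hΦdiff : Differentiable ℝ Φ := hΦreg.differentiable one_ne_zero
  have hΦ'cont : Continuous (deriv Φ) := hΦreg.continuous_deriv le_rfl
  -- FTC for Φ
  have hFTC : ∀ w : ℝ, ∫ s in (0:ℝ)..w, deriv Φ s = Φ w := by
    intro w
    rw [intervalIntegral.integral_deriv_eq_sub (fun x _ => hΦdiff x)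
      (hΦ'cont.intervalIntegrable 0 w), hΦ0 0 le_rfl, sub_zero]
  -- lower bound for Φ on [0,θ₁]
  have hlow : ∀ w ∈ Icc (0:ℝ) θ₁, w ^ 2 / c₁ ≤ Φ w := by
    intro w hw
    have h1 : (∫ s in (0:ℝ)..w, (2 / c₁) * s) ≤ ∫ s in (0:ℝ)..w, deriv Φ s := by
      apply intervalIntegral.integral_mono_on hw.1
        ((continuous_const.mul continuous_id').intervalIntegrable 0 w)
        (hΦ'cont.intervalIntegrable 0 w)
      intro s hs
      have h := (hΦ' s ⟨hs.1, hs.2.trans hw.2⟩).1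
      have hc := hc₁
      show 2 / c₁ * s ≤ deriv Φ s
      rw [div_mul_eq_mul_div, one_mul] at h
      have h2 : 2 / c₁ * s = 2 * (s / c₁) := by ring
      rw [h2]
      linarith
    rw [hFTC w] at h1
    have h2 : (∫ s in (0:ℝ)..w, (2 / c₁) * s) = w ^ 2 / c₁ := by
      rw [intervalIntegral.integral_const_mul, integral_id]
      field_simp
      ring
    linarith
  -- upper bound for Φ on [0,θ₁]
  have hup : ∀ w ∈ Icc (0:ℝ) θ₁, Φ w ≤ c₁ * w ^ 2 := by
    intro w hw
    have h1 : (∫ s in (0:ℝ)..w, deriv Φ s) ≤ ∫ s in (0:ℝ)..w, (2 * c₁) * s := by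
      apply intervalIntegral.integral_mono_on hw.1
        (hΦ'cont.intervalIntegrable 0 w)
        ((continuous_const.mul continuous_id').intervalIntegrable 0 w)
      intro s hs
      have h := (hΦ' s ⟨hs.1, hs.2.trans hw.2⟩).2
      show deriv Φ s ≤ 2 * c₁ * s
      linarith
    rw [hFTC w] at h1
    have h2 : (∫ s in (0:ℝ)..w, (2 * c₁) * s) = c₁ * w ^ 2 := by
      rw [intervalIntegral.integral_const_mul, integral_id]
      ring
    linarith
  have hΦpos : ∀ w : ℝ, 0 < w → 0 < Φ w := by
    intro w hw
    rcases le_or_gt w θ₁ with h | h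
    · have h1 := hlow w ⟨hw.le, h⟩
      have h2 : 0 < w ^ 2 / c₁ := by positivity
      linarith
    · exact hΦθ₁.trans_le (hΦmono h.le)
  have hgpos : ∀ w : ℝ, 0 < w → 0 < g w := fun w hw =>
    inv_pos.2 (Real.sqrt_pos.2 (hΦpos w hw))
  have hgcontAt : ∀ w : ℝ, 0 < w → ContinuousAt g w := by
    intro w hw
    exact ((Real.continuous_sqrt.comp hΦreg.continuous).continuousAt).inv₀
      (ne_of_gt (Real.sqrt_pos.2 (hΦpos w hw)))
  have hgmeas : Measurable g :=
    ((Real.continuous_sqrt.comp hΦreg.continuous).measurable).inv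
  have hgint : ∀ a b : ℝ, 0 < a → 0 < b → IntervalIntegrable g MeasureTheory.volume a b := by
    intro a b ha hb
    apply ContinuousOn.intervalIntegrable
    intro w hw
    exact (hgcontAt w (lt_of_lt_of_le (lt_min ha hb) hw.1)).continuousWithinAt
  -- pointwise lower bound for g on (0,θ₁]
  have hglb : ∀ w : ℝ, 0 < w → w ≤ θ₁ → (Real.sqrt c₁)⁻¹ * w⁻¹ ≤ g w := by
    intro w hw hwθ
    have h1 : Real.sqrt (Φ w) ≤ Real.sqrt c₁ * w := by
      have : Real.sqrt (c₁ * w ^ 2) = Real.sqrt c₁ * w := by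
        rw [Real.sqrt_mul hc₁.le, Real.sqrt_sq hw.le]
      rw [← this]
      exact Real.sqrt_le_sqrt (hup w ⟨hw.le, hwθ⟩)
    have h2 : (Real.sqrt c₁ * w)⁻¹ ≤ (Real.sqrt (Φ w))⁻¹ :=
      inv_anti₀ (Real.sqrt_pos.2 (hΦpos w hw)) h1
    rw [mul_inv] at h2
    exact h2
  -- non-integrability of g over intervals touching 0
  have hnint : ∀ t : ℝ, t ≤ 0 → ¬ IntervalIntegrable g MeasureTheory.volume θ₁ t := by
    intro t ht hint
    rw [intervalIntegrable_iff] at hint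
    have hsub : Ioo (0:ℝ) θ₁ ⊆ uIoc θ₁ t := by
      rw [uIoc_of_ge (ht.trans hθ₁.le)]
      exact fun w hw => ⟨lt_of_le_of_lt ht hw.1, hw.2.le⟩
    have hint2 : MeasureTheory.IntegrableOn g (Ioo 0 θ₁) := hint.mono_set hsub
    have hbound : ∀ᵐ w ∂(MeasureTheory.volume.restrict (Ioo (0:ℝ) θ₁)),
        ‖(Real.sqrt c₁)⁻¹ * w⁻¹‖ ≤ g w := by
      rw [MeasureTheory.ae_restrict_iff' measurableSet_Ioo]
      refine MeasureTheory.ae_of_all _ fun w hw => ?_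
      have h1 := hglb w hw.1 hw.2.le
      have h2 : (0:ℝ) ≤ (Real.sqrt c₁)⁻¹ * w⁻¹ :=
        mul_nonneg (inv_nonneg.2 (Real.sqrt_nonneg _)) (inv_nonneg.2 hw.1.le)
      rw [Real.norm_eq_abs, abs_of_nonneg h2]
      exact h1
    have hinv : MeasureTheory.IntegrableOn (fun w : ℝ => (Real.sqrt c₁)⁻¹ * w⁻¹)
        (Ioo 0 θ₁) :=
      hint2.mono' ((measurable_const.mul measurable_inv).aestronglyMeasurable) hbound
    have hinv2 : MeasureTheory.IntegrableOn (fun w : ℝ => w⁻¹) (Ioo (0:ℝ) θ₁) := by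
      have hne : (Real.sqrt c₁) ≠ 0 := ne_of_gt (Real.sqrt_pos.2 hc₁)
      have h3 := hinv.const_mul (Real.sqrt c₁)
      refine MeasureTheory.IntegrableOn.congr_fun h3 (fun w _ => ?_) measurableSet_Ioo
      rw [← mul_assoc, mul_inv_cancel₀ hne, one_mul]
    have hrpow : MeasureTheory.IntegrableOn (fun w : ℝ => w ^ (-1:ℝ)) (Ioo (0:ℝ) θ₁) := by
      refine hinv2.congr_fun (fun w hw => ?_) measurableSet_Ioo
      rw [Real.rpow_neg_one]
    have := (integrableOn_Ioo_rpow_iff hθ₁).1 hrpow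
    linarith
  -- strict monotonicity of F on (0,∞)
  have hFmono : StrictMonoOn F (Ioi 0) := by
    intro s hs t ht hst
    have hadd : F s + (∫ w in s..t, g w) = F t :=
      intervalIntegral.integral_add_adjacent_intervals (hgint θ₁ s hθ₁ hs) (hgint s t hs ht)
    have hpos : 0 < ∫ w in s..t, g w :=
      intervalIntegral.intervalIntegral_pos_of_pos_on (hgint s t hs ht)
        (fun w hw => hgpos w (lt_trans hs hw.1)) hst
    linarith
  -- positivity of v away from 0
  have hvpos0 : ∀ x : ℝ, x ≠ 0 → 0 < v x := by
    intro x hx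
    by_contra h
    push_neg at h
    have h1 := hFv x
    rw [hFdef] at h1
    simp only at h1
    rw [intervalIntegral.integral_undef (hnint (v x) h)] at h1
    exact hx h1.symm
  -- positivity of v at 0
  have hv0pos : 0 < v 0 := by
    rcases lt_trichotomy (v 0) 0 with h | h | h
    · exfalso
      have hev : ∀ᶠ x in 𝓝[>] (0:ℝ), v x < 0 :=
        ((hvcont.continuousAt).eventually_lt_const h).filter_mono nhdsWithin_le_nhds
      obtain ⟨x, hx1, hx2⟩ := (hev.and eventually_mem_nhdsWithin).exists
      exact absurd hx1 (not_lt.2 (hvpos0 x (ne_of_gt hx2)).le)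
    · exfalso
      set ε : ℝ := θ₁ * Real.exp (-Real.sqrt c₁) with hεdef
      have hεpos : 0 < ε := by positivity
      have hεθ : ε < θ₁ := by
        have h1 : Real.exp (-Real.sqrt c₁) < 1 := by
          rw [Real.exp_lt_one_iff]
          simpa using Real.sqrt_pos.2 hc₁
        nlinarith
      have hε : Tendsto v (𝓝 0) (𝓝 0) := by
        have h5 := hvcont.tendsto (0:ℝ)
        rwa [h] at h5
      have hev : ∀ᶠ x in 𝓝[>] (0:ℝ), v x < ε :=
        (hε.eventually_lt_const hεpos).filter_mono nhdsWithin_le_nhds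
      obtain ⟨x, hx1, hx2⟩ := (hev.and eventually_mem_nhdsWithin).exists
      have hvx : 0 < v x := hvpos0 x (ne_of_gt hx2)
      have hvθ : v x < θ₁ := hx1.trans hεθ
      -- compare integrals
      have hcontc : ContinuousOn (fun w : ℝ => (Real.sqrt c₁)⁻¹ * w⁻¹) (uIcc (v x) θ₁) := by
        intro w hw
        have hw0 : 0 < w := lt_of_lt_of_le (lt_min hvx hθ₁) hw.1
        exact (ContinuousAt.continuousWithinAt
          (continuousAt_const.mul (continuousAt_inv₀ (ne_of_gt hw0))))
      have hmono2 : (∫ w in (v x)..θ₁, (Real.sqrt c₁)⁻¹ * w⁻¹) ≤ ∫ w in (v x)..θ₁, g w := by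
        apply intervalIntegral.integral_mono_on hvθ.le
          (hcontc.intervalIntegrable) (hgint (v x) θ₁ hvx hθ₁)
        intro w hw
        exact hglb w (lt_of_lt_of_le hvx hw.1) hw.2
      have hcalc : (∫ w in (v x)..θ₁, (Real.sqrt c₁)⁻¹ * w⁻¹)
          = (Real.sqrt c₁)⁻¹ * Real.log (θ₁ / v x) := by
        rw [intervalIntegral.integral_const_mul, integral_inv]
        rw [mem_uIcc]
        push_neg
        constructor
        · intro h'; linarith
        · intro h'; linarith
      have hlog : Real.sqrt c₁ < Real.log (θ₁ / v x) := by
        have h1 : Real.exp (Real.sqrt c₁) < θ₁ / v x := by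
          rw [lt_div_iff₀ hvx]
          calc Real.exp (Real.sqrt c₁) * v x < Real.exp (Real.sqrt c₁) * ε := by
                exact mul_lt_mul_of_pos_left hx1 (Real.exp_pos _)
            _ = θ₁ := by
                rw [hεdef, ← mul_assoc, mul_comm (Real.exp _) θ₁, mul_assoc,
                  ← Real.exp_add, add_neg_cancel, Real.exp_zero, mul_one]
        calc Real.sqrt c₁ = Real.log (Real.exp (Real.sqrt c₁)) := (Real.log_exp _).symm
          _ < Real.log (θ₁ / v x) := Real.log_lt_log (Real.exp_pos _) h1
      have hsq : 0 < Real.sqrt c₁ := Real.sqrt_pos.2 hc₁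
      have hgt1 : 1 < (Real.sqrt c₁)⁻¹ * Real.log (θ₁ / v x) := by
        rw [← inv_mul_cancel₀ (ne_of_gt hsq)]
        exact mul_lt_mul_of_pos_left hlog (inv_pos.2 hsq)
      have hsymm : F (v x) = -(∫ w in (v x)..θ₁, g w) := by
        rw [hFdef]
        simp only
        rw [intervalIntegral.integral_symm]
      have : x ≤ -1 := by
        have h2 := hFv x
        rw [hsymm] at h2
        rw [hcalc] at hmono2
        linarith
      linarith [mem_Ioi.1 hx2]
    · exact h
  have hvpos : ∀ x : ℝ, 0 < v x := by
    intro x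
    rcases eq_or_ne x 0 with rfl | hx
    · exact hv0pos
    · exact hvpos0 x hx
  -- v 0 = θ₁
  have hv0 : v 0 = θ₁ := by
    have h1 : F (v 0) = 0 := hFv 0
    have h2 : F θ₁ = 0 := by
      rw [hFdef]
      simp only
      exact intervalIntegral.integral_same
    exact hFmono.injOn (mem_Ioi.2 hv0pos) (mem_Ioi.2 hθ₁) (h1.trans h2.symm)
  -- strict monotonicity of v
  have hvmono : StrictMono v := by
    intro x y hxy
    by_contra hcon
    push_neg at hcon
    have h1 : F (v y) ≤ F (v x) :=
      hFmono.monotoneOn (mem_Ioi.2 (hvpos y)) (mem_Ioi.2 (hvpos x)) hcon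
    rw [hFv x, hFv y] at h1
    linarith
  -- derivative of v
  have hvderiv : ∀ x : ℝ, HasDerivAt v (Real.sqrt (Φ (v x))) x := by
    intro x
    have h1 : HasDerivAt F (g (v x)) (v x) :=
      intervalIntegral.integral_hasDerivAt_right (hgint θ₁ (v x) hθ₁ (hvpos x))
        (hgmeas.aestronglyMeasurable.stronglyMeasurableAtFilter)
        (hgcontAt (v x) (hvpos x))
    have h2 : g (v x) ≠ 0 := ne_of_gt (hgpos _ (hvpos x))
    have h3 : HasDerivAt v (g (v x))⁻¹ x :=
      HasDerivAt.of_local_left_inverse (hvcont.continuousAt) h1 h2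
        (Filter.Eventually.of_forall hFv)
    have h4 : (g (v x))⁻¹ = Real.sqrt (Φ (v x)) := by
      rw [hgdef]
      simp only
      rw [inv_inv]
    rwa [h4] at h3
  have hvdiff : Differentiable ℝ v := fun x => (hvderiv x).differentiableAt
  have hdv : deriv v = fun x => Real.sqrt (Φ (v x)) := funext fun x => (hvderiv x).deriv
  have hdmono : Monotone (deriv v) := by
    rw [hdv]
    intro x y hxy
    exact Real.sqrt_le_sqrt (hΦmono (hvmono.monotone hxy))
  have hconv : ConvexOn ℝ univ v := Monotone.convexOn_univ_of_deriv hvdiff hdmono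
  -- second derivative
  have hsnd : ∀ x, deriv (deriv v) x = (1/2) * deriv Φ (v x) := by
    intro x
    rw [hdv]
    have h0 : Φ (v x) ≠ 0 := ne_of_gt (hΦpos _ (hvpos x))
    have h1 : HasDerivAt Φ (deriv Φ (v x)) (v x) := (hΦdiff (v x)).hasDerivAt
    have h2 := h1.comp x (hvderiv x)
    have h3 := (Real.hasDerivAt_sqrt h0).comp x h2
    have h3' : HasDerivAt (fun y => Real.sqrt (Φ (v y)))
        (1 / (2 * Real.sqrt (Φ (v x))) * (deriv Φ (v x) * Real.sqrt (Φ (v x)))) x := h3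
    rw [h3'.deriv]
    have hs : Real.sqrt (Φ (v x)) ≠ 0 := by
      exact ne_of_gt (Real.sqrt_pos.2 (hΦpos _ (hvpos x)))
    field_simp
  -- v' → 1 at +∞
  have htop : Tendsto (deriv v) atTop (nhds 1) := by
    have hev : deriv v =ᶠ[atTop] fun _ => (1:ℝ) := by
      rw [EventuallyEq, eventually_atTop]
      refine ⟨F θ₂, fun x hx => ?_⟩
      have hvθ₂ : θ₂ ≤ v x := by
        by_contra hcon
        push_neg at hcon
        have h1 : F (v x) < F θ₂ :=
          hFmono (mem_Ioi.2 (hvpos x)) (mem_Ioi.2 (hθ₁.trans hθ₁₂)) hcon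
        rw [hFv x] at h1
        linarith
      rw [hdv]
      simp [hΦ1 (v x) hvθ₂]
    exact Tendsto.congr' hev.symm tendsto_const_nhds
  -- v → 0 at -∞
  have hbot : Tendsto v atBot (nhds 0) := by
    rw [tendsto_order]
    constructor
    · intro a ha
      exact Eventually.of_forall fun x => ha.trans (hvpos x)
    · intro a ha
      rw [eventually_atBot]
      refine ⟨F (min a θ₁) - 1, fun x hx => ?_⟩
      have hmin : 0 < min a θ₁ := lt_min ha hθ₁
      by_contra hcon
      push_neg at hcon
      have h2 : min a θ₁ ≤ v x := le_trans (min_le_left _ _) hcon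
      have h3 : F (min a θ₁) ≤ F (v x) :=
        hFmono.monotoneOn (mem_Ioi.2 hmin) (mem_Ioi.2 (hvpos x)) h2
      rw [hFv x] at h3
      linarith
  exact ⟨hvpos, hvmono, hconv, hsnd, hv0, htop, hbot⟩
end

section
/- Let u be a convex C² solution of u'' = (1/2)Φ'(u) on ℝ with u(0) = θ₁, u'(x) → 1 + t as x → +∞ for some t > 0, and u(x) → −∞ as x → −∞. Then u'(x) → √(2t + t²) as x → −∞. Moreover if x_t denotes the unique root of u, then x_t ≥ −√(2c₁)·log(1 + θ₁/t). -/
open Real Set Filter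

/-- the convex monotone 1D solution with slope 1+t at +∞ has slope
√(2t+t²) at −∞, and its unique root x_t satisfies x_t ≥ −√(2c₁) log(1+θ₁/t). -/
theorem statement3
    (Φ : ℝ → ℝ) (θ₁ θ₂ c₁ t : ℝ)
    (hθ₁ : 0 < θ₁) (hθ₁₂ : θ₁ < θ₂) (hc₁ : 0 < c₁) (ht : 0 < t)
    (hΦreg : ContDiff ℝ 1 Φ)
    (hΦ0 : ∀ s ≤ (0:ℝ), Φ s = 0)
    (hΦ1 : ∀ s, θ₂ ≤ s → Φ s = 1)
    (hΦ' : ∀ s ∈ Icc (0:ℝ) θ₁,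
        (1/c₁) * s ≤ (1/2) * deriv Φ s ∧ (1/2) * deriv Φ s ≤ c₁ * s)
    (u : ℝ → ℝ) (hu : ContDiff ℝ 2 u) (huconv : ConvexOn ℝ univ u)
    (hODE : ∀ x, deriv (deriv u) x = (1/2) * deriv Φ (u x))
    (hu0 : u 0 = θ₁)
    (hslope : Tendsto (deriv u) atTop (nhds (1 + t)))
    (hbot : Tendsto u atBot atBot)
    (hconsv : ∀ x, (deriv u x)^2 - Φ (u x) = (1 + t)^2 - 1) :
    Tendsto (deriv u) atBot (nhds (Real.sqrt (2*t + t^2))) ∧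
    (∃! x : ℝ, u x = 0) ∧
    (∀ x : ℝ, u x = 0 → -Real.sqrt (2*c₁) * Real.log (1 + θ₁ / t) ≤ x) := by
  have hudiff : Differentiable ℝ u := hu.differentiable (by norm_num)
  have hucont : Continuous u := hudiff.continuous
  set T := Real.sqrt (2*t + t^2) with hT
  have hT2 : T^2 = 2*t + t^2 := Real.sq_sqrt (by nlinarith)
  have hTpos : 0 < T := Real.sqrt_pos.2 (by nlinarith)
  have hmono : Monotone (deriv u) := by
    have := huconv.monotoneOn_deriv (fun x _ => hudiff x)
    exact monotoneOn_univ.1 this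
  -- a point b below which u ≤ -1
  obtain ⟨b, hb⟩ : ∃ b, ∀ x ≤ b, u x ≤ -1 := by
    have := hbot.eventually (eventually_le_atBot (-1 : ℝ))
    exact eventually_atBot.1 this
  -- derivative equals T on Iic b
  have hderivT : ∀ x ≤ b, deriv u x = T := by
    intro x hx
    have hsq : (deriv u x)^2 = T^2 := by
      have h0 : Φ (u x) = 0 := hΦ0 _ (by linarith [hb x hx])
      have := hconsv x
      rw [h0] at this; rw [hT2]; linarith
    have : deriv u x = T ∨ deriv u x = -T := sq_eq_sq_iff_eq_or_eq_neg.1 hsq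
    rcases this with h | h
    · exact h
    · exfalso
      -- deriv u ≤ -T on Iic x, so u antitone there: contradicts u → -∞
      have hanti : AntitoneOn u (Iic x) := by
        apply antitoneOn_of_deriv_nonpos (convex_Iic x) hucont.continuousOn
          (fun z _ => (hudiff z).differentiableWithinAt)
        intro z hz
        rw [interior_Iic] at hz
        have : deriv u z ≤ deriv u x := hmono (le_of_lt hz)
        rw [h] at this; linarith
      obtain ⟨z, hz⟩ : ∃ z, z ≤ x ∧ u z ≤ u x - 1 := by
        have := hbot.eventually (eventually_le_atBot (u x - 1))
        rcases eventually_atBot.1 this with ⟨c, hc⟩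
        exact ⟨min c x, min_le_right _ _, hc _ (min_le_left _ _)⟩
      have := hanti (mem_Iic.2 hz.1) (mem_Iic.2 le_rfl) hz.1
      linarith [hz.2]
  -- deriv u ≥ T everywhere
  have hge : ∀ x, T ≤ deriv u x := by
    intro x
    rcases le_total x b with h | h
    · exact (hderivT x h).ge
    · calc T = deriv u b := (hderivT b le_rfl).symm
        _ ≤ deriv u x := hmono h
  have husm : StrictMono u := strictMono_of_deriv_pos (fun x => lt_of_lt_of_le hTpos (hge x))
  -- part 1
  have part1 : Tendsto (deriv u) atBot (nhds T) := by
    apply Tendsto.congr' _ tendsto_const_nhds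
    filter_upwards [eventually_le_atBot b] with x hx
    exact (hderivT x hx).symm
  -- part 2: existence
  have hb0 : min b (-1) ≤ 0 := le_trans (min_le_right _ _) (by norm_num)
  have hub : u (min b (-1)) ≤ 0 := by linarith [hb (min b (-1)) (min_le_left _ _)]
  obtain ⟨x₀, hx₀mem, hx₀⟩ : ∃ x₀ ∈ Icc (min b (-1)) 0, u x₀ = 0 :=
    intermediate_value_Icc hb0 hucont.continuousOn ⟨hub, by rw [hu0]; exact hθ₁.le⟩
  have part2 : ∃! x : ℝ, u x = 0 := by
    refine ⟨x₀, hx₀, fun y hy => husm.injective (by rw [hy, hx₀])⟩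
  refine ⟨part1, part2, ?_⟩
  -- part 3
  intro x hx
  have hxneg : x < 0 := by
    by_contra h
    push_neg at h
    have : u 0 ≤ u x := husm.monotone h
    rw [hu0, hx] at this; linarith
  -- c₁ ≥ 1
  have hc1ge : 1 ≤ c₁ := by
    have := hΦ' θ₁ ⟨hθ₁.le, le_rfl⟩
    have h2 : (1/c₁) * θ₁ ≤ c₁ * θ₁ := le_trans this.1 this.2
    rw [div_mul_eq_mul_div, one_mul, div_le_iff₀ hc₁] at h2
    nlinarith [h2, mul_pos hθ₁ hc₁, sq_nonneg (c₁ - 1)]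
  have hsc : Real.sqrt c₁ ^ 2 = c₁ := Real.sq_sqrt hc₁.le
  have hscpos : 0 < Real.sqrt c₁ := Real.sqrt_pos.2 hc₁
  have hsc1 : 1 ≤ Real.sqrt c₁ := by
    nlinarith
  have hs2c : Real.sqrt (2*c₁) ^ 2 = 2*c₁ := Real.sq_sqrt (by linarith)
  have hs2cpos : 0 < Real.sqrt (2*c₁) := Real.sqrt_pos.2 (by linarith)
  set sc := Real.sqrt c₁
  set s2c := Real.sqrt (2*c₁)
  -- Φ lower bound: Φ s ≥ s²/c₁ on [0, θ₁]
  have hΦdiff : Differentiable ℝ Φ := hΦreg.differentiable (by norm_num)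
  have hΦlow : ∀ s ∈ Icc (0:ℝ) θ₁, s^2 / c₁ ≤ Φ s := by
    have hmonoh : MonotoneOn (fun s => Φ s - s^2 / c₁) (Icc 0 θ₁) := by
      apply monotoneOn_of_deriv_nonneg (convex_Icc 0 θ₁)
        (hΦreg.continuous.continuousOn.sub (by fun_prop))
        (fun z _ => ((hΦdiff z).sub ((differentiable_pow 2) z |>.div_const c₁)).differentiableWithinAt)
      intro z hz
      rw [interior_Icc] at hz
      have hd : deriv (fun s => Φ s - s^2 / c₁) z = deriv Φ z - 2*z/c₁ := by
        rw [show (fun s => Φ s - s^2 / c₁) = (Φ - fun x => x ^ 2 / c₁) from rfl, deriv_sub (hΦdiff z) (((differentiable_pow 2) z).div_const c₁)]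
        simp [deriv_div_const, mul_comm]
      rw [show (Φ - fun x => x ^ 2 / c₁) = (fun s => Φ s - s^2 / c₁) from rfl, hd]
      have hzz := (hΦ' z ⟨hz.1.le, hz.2.le⟩).1
      have : 2 * z / c₁ = 2 * (1/c₁ * z) := by ring
      rw [this]
      linarith
    intro s hs
    have := hmonoh ⟨le_rfl, hθ₁.le⟩ hs hs.1
    have h0 : Φ 0 = 0 := hΦ0 0 le_rfl
    simp only [h0] at this
    norm_num at this
    linarith
  -- pointwise derivative lower bound on [x, 0]
  have hkey : ∀ s ∈ Icc x 0, (u s + sc * T) / s2c ≤ deriv u s := by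
    intro s hs
    have h1 : u x ≤ u s := husm.monotone hs.1
    have h2 : u s ≤ u 0 := husm.monotone hs.2
    rw [hx] at h1; rw [hu0] at h2
    have hΦl : (u s)^2 / c₁ ≤ Φ (u s) := hΦlow _ ⟨h1, h2⟩
    have hsq : (deriv u s)^2 = T^2 + Φ (u s) := by
      have := hconsv s
      rw [hT2]; linarith
    have hA : 0 < deriv u s := lt_of_lt_of_le hTpos (hge s)
    have hΦl' : (u s)^2 ≤ Φ (u s) * c₁ := (div_le_iff₀ hc₁).1 hΦl
    have hA2 : (deriv u s * s2c)^2 = (T^2 + Φ (u s)) * (2*c₁) := by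
      rw [mul_pow, hsq, hs2c]
    rw [div_le_iff₀ hs2cpos]
    nlinarith [hA2, hΦl', sq_nonneg (sc * T - u s), mul_pos hA hs2cpos,
      mul_nonneg (mul_nonneg hscpos.le hTpos.le) h1]
  -- g(s) = log(u s + sc*T) - s/s2c is monotone on [x,0]
  have hposON : ∀ s ∈ Icc x 0, 0 < u s + sc * T := by
    intro s hs
    have h1 : u x ≤ u s := husm.monotone hs.1
    rw [hx] at h1
    nlinarith [mul_pos hscpos hTpos]
  have hgd : ∀ s ∈ Icc x 0, HasDerivAt (fun z => Real.log (u z + sc * T) - z / s2c)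
      (deriv u s / (u s + sc * T) - 1 / s2c) s := by
    intro s hs
    have h1 : HasDerivAt (fun z => u z + sc * T) (deriv u s) s :=
      (hudiff s).hasDerivAt.add_const _
    have h2 := h1.log (ne_of_gt (hposON s hs))
    exact h2.sub ((hasDerivAt_id s).div_const s2c)
  have hgmono : MonotoneOn (fun z => Real.log (u z + sc * T) - z / s2c) (Icc x 0) := by
    apply monotoneOn_of_deriv_nonneg (convex_Icc x 0)
      (fun s hs => ((hgd s hs).continuousAt).continuousWithinAt)
      (fun s hs => ((hgd s (interior_subset hs)).differentiableAt).differentiableWithinAt)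
    intro s hs
    rw [interior_Icc] at hs
    have hs' : s ∈ Icc x 0 := ⟨hs.1.le, hs.2.le⟩
    rw [(hgd s hs').deriv]
    have hp := hposON s hs'
    have := hkey s hs'
    rw [div_le_iff₀ hs2cpos] at this
    rw [sub_nonneg, div_le_div_iff₀ hs2cpos hp]
    linarith
  have hgle : Real.log (u x + sc * T) - x / s2c ≤ Real.log (u 0 + sc * T) - 0 / s2c :=
    hgmono ⟨le_rfl, hxneg.le⟩ ⟨hxneg.le, le_rfl⟩ hxneg.le
  rw [hx, hu0, zero_add, zero_div, sub_zero] at hgle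
  have hscT : t ≤ sc * T := by
    have hTt : t ≤ T := by
      have h9 : t = Real.sqrt (t^2) := (Real.sqrt_sq ht.le).symm
      rw [hT, h9]
      exact Real.sqrt_le_sqrt (by nlinarith)
    calc t ≤ T := hTt
      _ = 1 * T := (one_mul T).symm
      _ ≤ sc * T := mul_le_mul_of_nonneg_right hsc1 hTpos.le
  have hlog1 : Real.log (θ₁ + sc * T) - Real.log (sc * T) = Real.log (1 + θ₁ / (sc * T)) := by
    rw [← Real.log_div (by positivity) (by positivity)]
    congr 1
    field_simp
    ring
  have hlog2 : Real.log (1 + θ₁ / (sc * T)) ≤ Real.log (1 + θ₁ / t) := by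
    apply Real.log_le_log (by positivity)
    have : θ₁ / (sc * T) ≤ θ₁ / t := div_le_div_of_nonneg_left hθ₁.le ht hscT
    linarith
  have h7 : -x / s2c ≤ Real.log (1 + θ₁ / t) := by
    rw [← hlog1] at hlog2
    have hd : -x / s2c = -(x / s2c) := by ring
    rw [hd]
    linarith
  rw [div_le_iff₀ hs2cpos] at h7
  linarith [h7]
end

section
/- Under the hypotheses of the previous statement (even-type 1D solution with slopes ±(1−|τ|) at ±∞ and minimum point y_τ, normalized so u(0) = θ₁), the minimum point satisfies y_τ ≥ −√(2c₁)·(2 + log(θ₁/√(2|τ|/c₁))). -/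
open Real Set Filter

set_option maxHeartbeats 1000000

lemma monoIcc {f : ℝ → ℝ} {a b : ℝ} (hf : ContinuousOn f (Icc a b))
    (hf' : ∀ x ∈ Ioo a b, DifferentiableAt ℝ f x)
    (h : ∀ x ∈ Ioo a b, 0 ≤ deriv f x) : MonotoneOn f (Icc a b) := by
  apply monotoneOn_of_deriv_nonneg (convex_Icc a b) hf
  · rw [interior_Icc]; exact fun x hx => (hf' x hx).differentiableWithinAt
  · rw [interior_Icc]; exact h

/-- lower bound on the minimum point y_τ of the even-type 1D solution:
y_τ ≥ −√(2c₁)·(2 + log(θ₁/√(2|τ|/c₁))). -/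
theorem statement5
    (Φ : ℝ → ℝ) (θ₁ c₁ τ : ℝ) (yτ : ℝ)
    (hθ₁ : 0 < θ₁) (hc₁ : 0 < c₁) (hτ : τ ∈ Ioo (-1 : ℝ) 0)
    (hΦreg : ContDiff ℝ 1 Φ)
    (hΦ0 : ∀ s ≤ (0:ℝ), Φ s = 0)
    (hΦ' : ∀ s ∈ Icc (0:ℝ) θ₁,
        (1/c₁) * s ≤ (1/2) * deriv Φ s ∧ (1/2) * deriv Φ s ≤ c₁ * s)
    (u : ℝ → ℝ) (hu : ContDiff ℝ 2 u)
    (hODE : ∀ x, deriv (deriv u) x = (1/2) * deriv Φ (u x))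
    (hconsv : ∀ x, (deriv u x)^2 = Φ (u x) - 2*|τ| + τ^2)
    (hmin : ∀ x, u yτ ≤ u x)
    (hminval : Φ (u yτ) = 2*|τ| - τ^2)
    (hu0 : u 0 = θ₁)
    (hyτ : yτ ≤ 0)
    (hmono : MonotoneOn u (Icc yτ 0)) :
    -Real.sqrt (2*c₁) * (2 + Real.log (θ₁ / Real.sqrt (2*|τ|/c₁))) ≤ yτ := by
  have hτ0 : 0 < |τ| := abs_pos.mpr (ne_of_lt hτ.2)
  have hτ1 : |τ| < 1 := abs_lt.mpr ⟨hτ.1, lt_trans hτ.2 one_pos⟩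
  set m := u yτ with hm
  -- basic regularity
  have hud : Differentiable ℝ u := hu.differentiable (by norm_num)
  have hu2 : ContDiff ℝ ((1:WithTop ℕ∞)+1) u := by
    rw [show ((1:WithTop ℕ∞)+1) = 2 from by norm_num]; exact hu
  have hg1 : ContDiff ℝ 1 (deriv u) := (contDiff_succ_iff_deriv.mp hu2).2.2
  have hgd : Differentiable ℝ (deriv u) := hg1.differentiable one_ne_zero
  have hΦd : Differentiable ℝ Φ := hΦreg.differentiable one_ne_zero
  have hΦc : Continuous (deriv Φ) := hΦreg.continuous_deriv le_rfl
  -- FTC for Φ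
  have hFTC : ∀ a b : ℝ, Φ b - Φ a = ∫ s in a..b, deriv Φ s := by
    intro a b
    rw [intervalIntegral.integral_deriv_eq_sub (fun x _ => hΦd x)
      (hΦc.intervalIntegrable a b)]
  -- m > 0
  have hmpos : 0 < m := by
    by_contra h
    push_neg at h
    have := hΦ0 m h
    rw [hminval] at this
    nlinarith [sq_abs τ, hτ0, hτ1]
  -- m ≤ θ₁
  have hmθ : m ≤ θ₁ := hu0 ▸ hmin 0
  -- Φ m ≤ c₁ m²
  have hΦm_ub : Φ m ≤ c₁ * m^2 := by
    have h0 : Φ m = ∫ s in (0:ℝ)..m, deriv Φ s := by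
      have := hFTC 0 m; rw [hΦ0 0 le_rfl] at this; linarith
    have hint : (∫ s in (0:ℝ)..m, deriv Φ s) ≤ ∫ s in (0:ℝ)..m, 2*c₁*s := by
      apply intervalIntegral.integral_mono_on hmpos.le (hΦc.intervalIntegrable 0 m)
        (((continuous_const.mul continuous_id).intervalIntegrable 0 m : IntervalIntegrable (fun s : ℝ => 2*c₁*s) _ 0 m))
      intro s hs
      simp only [Pi.mul_apply, id_eq]
      have := (hΦ' s ⟨hs.1, le_trans hs.2 hmθ⟩).2
      linarith
    have : (∫ s in (0:ℝ)..m, 2*c₁*s) = c₁ * m^2 := by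
      rw [intervalIntegral.integral_const_mul, integral_id]; ring
    linarith [h0 ▸ hint, this ▸ hint]
  -- m ≥ sqrt(|τ|/c₁)
  have hm2 : |τ|/c₁ ≤ m^2 := by
    rw [div_le_iff₀ hc₁]
    nlinarith [hminval, hΦm_ub, sq_abs τ, hτ0, hτ1]
  set s₀ := Real.sqrt (|τ|/c₁) with hs₀
  have hs₀pos : 0 < s₀ := Real.sqrt_pos.mpr (by positivity)
  have hs₀m : s₀ ≤ m := by
    calc s₀ ≤ Real.sqrt (m^2) := Real.sqrt_le_sqrt hm2
    _ = m := by rw [Real.sqrt_sq hmpos.le]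
  -- range of u on I
  have hrange : ∀ x ∈ Icc yτ 0, m ≤ u x ∧ u x ≤ θ₁ := by
    intro x hx
    exact ⟨hmin x, hu0 ▸ hmono hx (right_mem_Icc.mpr hyτ) hx.2⟩
  -- u'' ≥ m/c₁ on I
  have hddu : ∀ x ∈ Icc yτ 0, m/c₁ ≤ deriv (deriv u) x := by
    intro x hx
    obtain ⟨h1, h2⟩ := hrange x hx
    have := (hΦ' (u x) ⟨le_trans hmpos.le h1, h2⟩).1
    rw [hODE x]
    have : (1/c₁) * u x ≤ (1/2) * deriv Φ (u x) := this
    calc m/c₁ ≤ (1/c₁) * u x := by rw [div_eq_mul_inv]; rw [one_div]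
                                   exact mul_le_mul_of_nonneg_right h1 (by positivity) |>.trans_eq (mul_comm _ _)
    _ ≤ _ := this
  -- u'(yτ) = 0
  have hg0 : deriv u yτ = 0 := by
    have := hconsv yτ
    rw [← hm, hminval] at this
    nlinarith [this]
  -- g x ≥ (m/c₁)(x - yτ) on I
  have hglin : ∀ x ∈ Icc yτ 0, (m/c₁) * (x - yτ) ≤ deriv u x := by
    have hmono2 : MonotoneOn (fun x => deriv u x - (m/c₁) * (x - yτ)) (Icc yτ 0) := by
      apply monoIcc
      · exact (hgd.continuous.sub (continuous_const.mul (continuous_id.sub continuous_const))).continuousOn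
      · intro x _
        exact (hgd x).sub (((hasDerivAt_id x).sub_const yτ).const_mul (m/c₁)).differentiableAt
      · intro x hx
        have hD : HasDerivAt (fun x => deriv u x - (m/c₁) * (x - yτ))
            (deriv (deriv u) x - (m/c₁) * 1) x :=
          (hgd x).hasDerivAt.sub (((hasDerivAt_id x).sub_const yτ).const_mul (m/c₁))
        rw [hD.deriv]
        have := hddu x (Ioo_subset_Icc_self hx)
        have : 0 < m/c₁ := by positivity
        nlinarith [hddu x (Ioo_subset_Icc_self hx)]
    intro x hx
    have := hmono2 (left_mem_Icc.mpr hyτ) hx hx.1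
    simp only [hg0, sub_self, mul_zero, zero_sub] at this
    linarith [this]
  -- g ≥ 0 on I
  have hgnn : ∀ x ∈ Icc yτ 0, 0 ≤ deriv u x := by
    intro x hx
    have := hglin x hx
    have h2 : 0 ≤ (m/c₁) * (x - yτ) := by
      apply mul_nonneg (by positivity); linarith [hx.1]
    linarith
  -- u x ≥ m + (m/(2c₁))(x-yτ)² on I
  have hquad : ∀ x ∈ Icc yτ 0, m + (m/(2*c₁)) * (x - yτ)^2 ≤ u x := by
    have hmono3 : MonotoneOn (fun x => u x - (m/(2*c₁)) * (x - yτ)^2) (Icc yτ 0) := by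
      apply monoIcc
      · exact (hud.continuous.sub (continuous_const.mul ((continuous_id.sub continuous_const).pow 2))).continuousOn
      · intro x _
        exact (hud x).sub ((((hasDerivAt_id x).sub_const yτ).pow 2).const_mul (m/(2*c₁))).differentiableAt
      · intro x hx
        have hD : HasDerivAt (fun x => u x - (m/(2*c₁)) * (x - yτ)^2)
            (deriv u x - (m/(2*c₁)) * (↑2 * (x - yτ)^(2-1) * 1)) x :=
          (hud x).hasDerivAt.sub ((((hasDerivAt_id x).sub_const yτ).pow 2).const_mul (m/(2*c₁)))
        rw [hD.deriv]
        have := hglin x (Ioo_subset_Icc_self hx)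
        have hc : (m/(2*c₁)) * (↑2 * (x - yτ)^(2-1) * 1) = (m/c₁) * (x - yτ) := by
          push_cast; field_simp
        rw [hc]; linarith
    intro x hx
    have := hmono3 (left_mem_Icc.mpr hyτ) hx hx.1
    simp only [sub_self] at this
    nlinarith [this]
  -- sqrt c₁
  set sc := Real.sqrt c₁ with hsc
  have hscpos : 0 < sc := Real.sqrt_pos.mpr hc₁
  have hsc2 : sc^2 = c₁ := Real.sq_sqrt hc₁.le
  -- g x ≥ (u x - m)/sc on I
  have hgexp : ∀ x ∈ Icc yτ 0, (u x - m)/sc ≤ deriv u x := by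
    intro x hx
    obtain ⟨h1, h2⟩ := hrange x hx
    have hc : (deriv u x)^2 = Φ (u x) - Φ m := by
      rw [hminval]; linarith [hconsv x]
    have hint : (u x^2 - m^2)/c₁ ≤ Φ (u x) - Φ m := by
      rw [hFTC m (u x)]
      have hcomp : (∫ s in m..(u x), (2/c₁)*s) ≤ ∫ s in m..(u x), deriv Φ s := by
        apply intervalIntegral.integral_mono_on h1
          (((continuous_const.mul continuous_id).intervalIntegrable m (u x) : IntervalIntegrable (fun s : ℝ => (2/c₁)*s) _ m (u x)))
          (hΦc.intervalIntegrable m (u x))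
        intro s hs
        simp only [Pi.mul_apply, id_eq]
        have := (hΦ' s ⟨le_trans hmpos.le hs.1, le_trans hs.2 h2⟩).1
        rw [one_div] at this
        have h2c : 2/c₁*s = 2*(c₁⁻¹*s) := by ring
        linarith [this, h2c.le, h2c.ge]
      have : (∫ s in m..(u x), (2/c₁)*s) = (u x^2 - m^2)/c₁ := by
        rw [intervalIntegral.integral_const_mul, integral_id]; field_simp
      linarith
    have hsq : ((u x - m)/sc)^2 ≤ (deriv u x)^2 := by
      rw [hc, div_pow, hsc2]
      have : (u x - m)^2 ≤ u x^2 - m^2 := by nlinarith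
      calc (u x - m)^2 / c₁ ≤ (u x^2 - m^2)/c₁ := by gcongr
      _ ≤ _ := hint
    have h0 : 0 ≤ (u x - m)/sc := by
      apply div_nonneg _ hscpos.le; linarith
    nlinarith [hgnn x hx, hsq, h0]
  -- log bound setup
  set L := Real.log (θ₁ / Real.sqrt (2*|τ|/c₁)) with hL
  have hsqrt2 : Real.sqrt (2*|τ|/c₁) = Real.sqrt 2 * s₀ := by
    rw [hs₀, ← Real.sqrt_mul (by norm_num : (0:ℝ) ≤ 2), mul_div_assoc]
  have h2pos : (0:ℝ) < Real.sqrt 2 := by positivity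
  have hLval : L = Real.log θ₁ - Real.log (Real.sqrt 2) - Real.log s₀ := by
    rw [hL, hsqrt2, Real.log_div hθ₁.ne' (by positivity), Real.log_mul h2pos.ne' hs₀pos.ne']
    ring
  have hlog2 : Real.log (Real.sqrt 2) ≤ 1 := by
    have := Real.log_le_sub_one_of_pos h2pos
    have : Real.sqrt 2 ≤ 2 := by
      nlinarith [Real.sq_sqrt (by norm_num : (0:ℝ) ≤ 2), Real.sqrt_nonneg 2]
    nlinarith [Real.log_le_sub_one_of_pos h2pos]
  have hlog2' : 0 ≤ Real.log (Real.sqrt 2) := Real.log_nonneg (by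
    nlinarith [Real.sq_sqrt (by norm_num : (0:ℝ) ≤ 2), Real.sqrt_nonneg 2])
  have hθs : s₀ ≤ θ₁ := le_trans hs₀m hmθ
  have hLlb : -Real.log (Real.sqrt 2) ≤ L := by
    rw [hLval]
    have := Real.log_le_log hs₀pos hθs
    linarith
  set s2c := Real.sqrt (2*c₁) with hs2c
  have hs2cval : s2c = Real.sqrt 2 * sc := by
    rw [hs2c, hsc, ← Real.sqrt_mul (by norm_num : (0:ℝ) ≤ 2)]
  have hs2cpos : 0 < s2c := Real.sqrt_pos.mpr (by positivity)
  by_cases hcase : yτ + s2c ≤ 0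
  · -- main case
    set x₁ := yτ + s2c with hx₁
    have hx₁I : x₁ ∈ Icc yτ 0 := ⟨by linarith, hcase⟩
    have hux₁ : 2*m ≤ u x₁ := by
      have := hquad x₁ hx₁I
      have h2 : (x₁ - yτ)^2 = 2*c₁ := by
        have hx : x₁ - yτ = s2c := by rw [hx₁]; ring
        rw [hx, hs2c, Real.sq_sqrt (by positivity)]
      rw [h2] at this
      have : m + m ≤ u x₁ := by
        have hc : (m/(2*c₁)) * (2*c₁) = m := by field_simp
        linarith [hc ▸ this]
      linarith
    -- Gronwall: F x = (u x - m) * exp (-x/sc) monotone on I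
    have hF : MonotoneOn (fun x => (u x - m) * Real.exp (-x/sc)) (Icc yτ 0) := by
      apply monoIcc
      · exact ((hud.continuous.sub continuous_const).mul (Real.continuous_exp.comp ((continuous_id.neg).div_const sc))).continuousOn
      · intro x _
        exact ((hud x).sub_const m).mul
          (((hasDerivAt_id x).neg.div_const sc).exp).differentiableAt
      · intro x hx
        have hD : HasDerivAt (fun x => (u x - m) * Real.exp (-x/sc))
            (deriv u x * Real.exp (-x/sc) + (u x - m) * (Real.exp (-x/sc) * (-1/sc))) x :=
          (((hud x).hasDerivAt).sub_const m).mul (((hasDerivAt_id x).neg.div_const sc).exp)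
        rw [hD.deriv]
        have h1 := hgexp x (Ioo_subset_Icc_self hx)
        have hE : 0 < Real.exp (-x/sc) := Real.exp_pos _
        have : deriv u x * Real.exp (-x/sc) + (u x - m) * (Real.exp (-x/sc) * (-1/sc))
            = Real.exp (-x/sc) * (deriv u x - (u x - m)/sc) := by field_simp; ring
        rw [this]
        exact mul_nonneg hE.le (by linarith)
    have hF0 := hF hx₁I (right_mem_Icc.mpr hyτ) hcase
    simp only at hF0
    rw [neg_zero, zero_div, Real.exp_zero, mul_one, hu0] at hF0
    have hexp : m * Real.exp (-x₁/sc) ≤ θ₁ - m := by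
      calc m * Real.exp (-x₁/sc) ≤ (u x₁ - m) * Real.exp (-x₁/sc) := by
            apply mul_le_mul_of_nonneg_right (by linarith) (Real.exp_pos _).le
      _ ≤ θ₁ - m := hF0
    have hexp2 : Real.exp (-x₁/sc) ≤ θ₁/s₀ := by
      rw [le_div_iff₀ hs₀pos]
      calc Real.exp (-x₁/sc) * s₀ ≤ Real.exp (-x₁/sc) * m :=
            mul_le_mul_of_nonneg_left hs₀m (Real.exp_pos _).le
      _ = m * Real.exp (-x₁/sc) := mul_comm _ _
      _ ≤ θ₁ - m := hexp
      _ ≤ θ₁ := by linarith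
    have hlog : -x₁/sc ≤ Real.log (θ₁/s₀) :=
      (Real.le_log_iff_exp_le (by positivity)).mpr hexp2
    have hlogθs : Real.log (θ₁/s₀) = L + Real.log (Real.sqrt 2) := by
      rw [Real.log_div hθ₁.ne' hs₀pos.ne', hLval]; ring
    have h1 : -x₁ ≤ sc * (L + Real.log (Real.sqrt 2)) := by
      rw [← hlogθs]
      calc -x₁ = (-x₁/sc) * sc := by field_simp
      _ ≤ Real.log (θ₁/s₀) * sc := mul_le_mul_of_nonneg_right hlog hscpos.le
      _ = sc * Real.log (θ₁/s₀) := mul_comm _ _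
    have hsqrt2ge1 : 1 ≤ Real.sqrt 2 := by
      nlinarith [Real.sq_sqrt (by norm_num : (0:ℝ) ≤ 2), Real.sqrt_nonneg 2]
    have hLs : 0 ≤ L + Real.log (Real.sqrt 2) := by linarith [hLlb]
    rw [hs2cval] at hx₁ ⊢
    nlinarith [hscpos, hLs, hlog2, hsqrt2ge1, h1]
  · -- easy case : yτ > -s2c
    push_neg at hcase
    have : 1 ≤ 2 + L := by linarith [hLlb, hlog2]
    nlinarith [hs2cpos, hcase, this]
end

section
/- For the truncated subsolution w^ε (equal to 0 for x ≤ x_ε and equal to the increasing 1D solution v^ε with slope 1+ε at +∞ for x > x_ε, normalized so w^ε(0) = θ₁·ε), there exists c > 1 depending only on θ₁, θ₂, c₁ such that the diameter of the set {x : θ₁ε ≤ w^ε(x) ≤ θ₂ε} is at most c·ε, for every ε > 0. -/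
open Real Set Filter

/-- diameter bound for the "fat level set" {θ₁ε ≤ w^ε ≤ θ₂ε} of the
truncated 1D subsolution w^ε, uniformly in ε > 0, with a constant c > 1 depending
only on θ₁, θ₂, c₁. -/
theorem statement7
    (Φ : ℝ → ℝ) (θ₁ θ₂ c₁ : ℝ)
    (hθ₁ : 0 < θ₁) (hθ₁₂ : θ₁ < θ₂) (hc₁ : 0 < c₁)
    (hΦmono : Monotone Φ) (hΦnonneg : ∀ s, 0 ≤ Φ s)
    (hΦθ₁ : θ₁^2 / c₁ ≤ Φ θ₁) :
    ∃ c : ℝ, 1 < c ∧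
      ∀ ε : ℝ, 0 < ε →
      ∀ v : ℝ → ℝ, ContDiff ℝ 1 v → StrictMono v →
        v 0 = θ₁ * ε →
        (∀ x, 0 < v x → (deriv v x)^2 = Φ (v x / ε) + 2*ε + ε^2) →
      ∀ xε : ℝ, v xε = 0 →
      ∀ w : ℝ → ℝ, (∀ x, w x = if x ≤ xε then 0 else v x) →
        Metric.diam {x : ℝ | θ₁ * ε ≤ w x ∧ w x ≤ θ₂ * ε} ≤ c * ε := by
  have hsc : 0 < Real.sqrt c₁ := Real.sqrt_pos.mpr hc₁
  set m : ℝ := θ₁ / Real.sqrt c₁ with hmdef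
  have hm : 0 < m := div_pos hθ₁ hsc
  have hm2 : m ^ 2 = θ₁ ^ 2 / c₁ := by
    rw [hmdef, div_pow, Real.sq_sqrt hc₁.le]
  refine ⟨(θ₂ - θ₁) / m + 2, ?_, ?_⟩
  · have : 0 < (θ₂ - θ₁) / m := div_pos (by linarith) hm
    linarith
  intro ε hε v hv hvmono hv0 hode xε hxε w hw
  have hcε : 0 ≤ ((θ₂ - θ₁) / m + 2) * ε := by
    have : 0 < (θ₂ - θ₁) / m := div_pos (by linarith) hm
    positivity
  apply Metric.diam_le_of_forall_dist_le hcε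
  intro a ha b hb
  -- key: for p ≤ q in the set, q - p ≤ (θ₂-θ₁)/m * ε
  have key : ∀ p q : ℝ, p ≤ q →
      (θ₁ * ε ≤ w p ∧ w p ≤ θ₂ * ε) → (θ₁ * ε ≤ w q ∧ w q ≤ θ₂ * ε) →
      q - p ≤ (θ₂ - θ₁) / m * ε := by
    intro p q hpq hp hq
    have hθε : 0 < θ₁ * ε := mul_pos hθ₁ hε
    have hpx : ¬ p ≤ xε := by
      intro h
      rw [hw p, if_pos h] at hp
      linarith [hp.1]
    have hqx : ¬ q ≤ xε := fun h => hpx (le_trans hpq h)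
    rw [hw p, if_neg hpx] at hp
    rw [hw q, if_neg hqx] at hq
    -- on [p,q], v x ∈ [θ₁ε, θ₂ε]
    have hdiff : Differentiable ℝ v := hv.differentiable one_ne_zero
    have hderiv_nonneg : ∀ x, 0 ≤ deriv v x := by
      intro x
      have h := hasDerivAt_iff_tendsto_slope.mp (hdiff x).hasDerivAt
      have h2 : Tendsto (slope v x) (nhdsWithin x (Ioi x)) (nhds (deriv v x)) :=
        h.mono_left (nhdsWithin_mono x (fun y hy => ne_of_gt hy))
      refine ge_of_tendsto h2 ?_
      filter_upwards [self_mem_nhdsWithin] with y hy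
      rw [slope_def_field]
      exact div_nonneg (sub_nonneg.mpr (hvmono.monotone (le_of_lt hy)))
        (sub_pos.mpr hy).le
    have hbound : ∀ x ∈ Icc p q, m ≤ deriv v x := by
      intro x hx
      have h1 : θ₁ * ε ≤ v x := le_trans hp.1 (hvmono.monotone hx.1)
      have h2 : v x ≤ θ₂ * ε := le_trans (hvmono.monotone hx.2) hq.2
      have hvpos : 0 < v x := lt_of_lt_of_le hθε h1
      have hode' := hode x hvpos
      have hθle : θ₁ ≤ v x / ε := (le_div_iff₀ hε).mpr (by linarith [h1])
      have hΦ : θ₁ ^ 2 / c₁ ≤ Φ (v x / ε) := le_trans hΦθ₁ (hΦmono hθle)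
      have hsq : m ^ 2 ≤ (deriv v x) ^ 2 := by
        rw [hm2, hode']; nlinarith
      nlinarith [hderiv_nonneg x, hm]
    -- g := v - m • id is monotone on [p,q]
    have hg : MonotoneOn (fun x => v x - m * x) (Icc p q) := by
      apply monotoneOn_of_deriv_nonneg (convex_Icc p q)
      · exact (hdiff.continuous.sub (continuous_const.mul continuous_id)).continuousOn
      · intro x hx
        exact ((hdiff x).sub ((differentiable_const m).mul differentiable_id x)).differentiableWithinAt
      · intro x hx
        rw [interior_Icc] at hx
        have hD : HasDerivAt (fun y => v y - m * y) (deriv v x - m) x := by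
          exact ((hdiff x).hasDerivAt.sub ((hasDerivAt_id' x).const_mul m)).congr_deriv (by ring)
        rw [hD.deriv]
        have := hbound x ⟨hx.1.le, hx.2.le⟩
        linarith
    have hgle := hg ⟨le_rfl, hpq⟩ ⟨hpq, le_rfl⟩ hpq
    simp only at hgle
    rw [div_mul_eq_mul_div, le_div_iff₀ hm]
    nlinarith [hp.1, hq.2]
  have h2ε : 0 < 2 * ε := by linarith
  rw [Real.dist_eq, abs_le]
  rcases le_total a b with hab | hab
  · have := key a b hab ha hb
    constructor <;> nlinarith
  · have := key b a hab hb ha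
    constructor <;> nlinarith
end

section
/- For the truncated supersolution w^{−ε} (equal to its minimum value for x ≤ y_ε and equal to the 1D solution v^{−ε} with slope 1−ε at +∞ for x > y_ε, normalized so w^{−ε}(0) = θ₁ε), if ε ∈ (0, θ₁²/(8c₁)) then diam({x : θ₁ε ≤ w^{−ε}(x) ≤ θ₂ε}) ≤ c·ε, where c depends only on θ₁, θ₂, c₁. -/
open Real Set Filter
open Topology

set_option maxHeartbeats 2000000 in
/-- diameter bound for {θ₁ε ≤ w^{−ε} ≤ θ₂ε} for the truncated 1D
supersolution w^{−ε}, for ε ∈ (0, θ₁²/(8c₁)), with c depending only on θ₁, θ₂, c₁. -/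
theorem statement8
    (Φ : ℝ → ℝ) (θ₁ θ₂ c₁ : ℝ)
    (hθ₁ : 0 < θ₁) (hθ₁₂ : θ₁ < θ₂) (hc₁ : 0 < c₁)
    (hΦmono : Monotone Φ) (hΦnonneg : ∀ s, 0 ≤ Φ s)
    (hΦlow : ∀ s ∈ Icc (0:ℝ) θ₁, s^2 / (2 * c₁) ≤ Φ s) :
    ∃ c : ℝ, 1 < c ∧
      ∀ ε : ℝ, 0 < ε → ε < θ₁^2 / (8 * c₁) →
      ∀ v : ℝ → ℝ, ContDiff ℝ 1 v →
        v 0 = θ₁ * ε →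
        (∀ x, (deriv v x)^2 = Φ (v x / ε) - 2*ε + ε^2) →
      ∀ yε : ℝ, (∀ x, v yε ≤ v x) →
      ∀ w : ℝ → ℝ, (∀ x, w x = if x ≤ yε then v yε else v x) →
        Metric.diam {x : ℝ | θ₁ * ε ≤ w x ∧ w x ≤ θ₂ * ε} ≤ c * ε := by
  classical
  obtain ⟨m, hm⟩ : ∃ m : ℝ, m = θ₁ / (2 * Real.sqrt c₁) := ⟨_, rfl⟩
  have hsc₁ : 0 < Real.sqrt c₁ := Real.sqrt_pos.2 hc₁
  have hm0 : 0 < m := by rw [hm]; exact div_pos hθ₁ (by positivity)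
  have hm2 : m ^ 2 = θ₁ ^ 2 / (4 * c₁) := by
    rw [hm, div_pow, mul_pow, Real.sq_sqrt hc₁.le]
    norm_num
  refine ⟨(θ₂ - θ₁) / m + 2, ?_, ?_⟩
  · have : 0 ≤ (θ₂ - θ₁) / m := div_nonneg (by linarith) hm0.le
    linarith
  intro ε hε hε' v hv hv0 hode yε hyε w hw
  have hd : Differentiable ℝ v := hv.differentiable one_ne_zero
  have hcont : Continuous v := hd.continuous
  have hdc : Continuous (deriv v) := hv.continuous_deriv le_rfl
  obtain ⟨q, hqdef⟩ : ∃ q : ℝ, q = θ₁ ^ 2 / (4 * c₁) := ⟨_, rfl⟩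
  have hq : 0 < q := by rw [hqdef]; positivity
  have hqq : θ₁ ^ 2 / (2 * c₁) = q + q := by
    rw [hqdef]; field_simp; ring
  have hΦθ₁ : θ₁ ^ 2 / (2 * c₁) ≤ Φ θ₁ := hΦlow θ₁ ⟨hθ₁.le, le_rfl⟩
  have hεθ : 2 * ε < q := by
    rw [hqdef]
    have : θ₁ ^ 2 / (4 * c₁) = 2 * (θ₁ ^ 2 / (8 * c₁)) := by field_simp; ring
    rw [this]; linarith
  -- derivative vanishes at the global minimum
  have hdy : deriv v yε = 0 := by
    have hmin : IsLocalMin v yε := Filter.Eventually.of_forall hyε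
    exact hmin.deriv_eq_zero
  -- the minimum value is below θ₁ ε
  have hvylt : v yε < θ₁ * ε := by
    by_contra h
    push_neg at h
    have h1 : θ₁ ≤ v yε / ε := (le_div_iff₀ hε).2 h
    have h2 : Φ θ₁ ≤ Φ (v yε / ε) := hΦmono h1
    have h3 := hode yε
    rw [hdy] at h3
    nlinarith [sq_nonneg ε]
  -- lower bound on the square of the derivative where v ≥ θ₁ ε
  have hsq : ∀ x, θ₁ * ε ≤ v x → q ≤ (deriv v x) ^ 2 := by
    intro x hx
    have h1 : θ₁ ≤ v x / ε := (le_div_iff₀ hε).2 hx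
    have h2 : Φ θ₁ ≤ Φ (v x / ε) := hΦmono h1
    have h3 := hode x
    nlinarith [sq_nonneg ε]
  have hne : ∀ t, θ₁ * ε ≤ v t → deriv v t ≠ 0 := by
    intro t ht h0
    have := hsq t ht
    rw [h0] at this
    nlinarith
  -- membership in the level set
  have hmem : ∀ x, θ₁ * ε ≤ w x → w x ≤ θ₂ * ε →
      yε < x ∧ θ₁ * ε ≤ v x ∧ v x ≤ θ₂ * ε := by
    intro x h1 h2
    rw [hw x] at h1 h2
    by_cases hxy : x ≤ yε
    · rw [if_pos hxy] at h1; linarith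
    · push_neg at hxy
      rw [if_neg (not_le.2 hxy)] at h1 h2
      exact ⟨hxy, h1, h2⟩
  -- Claim A: the derivative is positive at points right of yε where v ≥ θ₁ ε
  have hpos : ∀ x, yε < x → θ₁ * ε ≤ v x → 0 < deriv v x := by
    intro x hxy hvx
    rcases lt_or_gt_of_ne (hne x hvx) with hneg | hposx
    · exfalso
      set K := {t | t ∈ Icc yε x ∧ v t < θ₁ * ε} with hK
      have hyK : yε ∈ K := ⟨⟨le_rfl, hxy.le⟩, hvylt⟩
      have hKne : K.Nonempty := ⟨yε, hyK⟩
      have hKbdd : BddAbove K := ⟨x, fun t ht => ht.1.2⟩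
      set u := sSup K with hu
      have huy : yε ≤ u := le_csSup hKbdd hyK
      have hux : u ≤ x := csSup_le hKne fun t ht => ht.1.2
      have hvu : v u ≤ θ₁ * ε := by
        have hcl : u ∈ closure K := csSup_mem_closure hKne hKbdd
        have hsub : closure K ⊆ {t | v t ≤ θ₁ * ε} :=
          closure_minimal (fun t ht => ht.2.le)
            (isClosed_le hcont continuous_const)
        exact hsub hcl
      have hgt : ∀ t, u < t → t ≤ x → θ₁ * ε ≤ v t := by
        intro t h1 h2
        by_contra h
        push_neg at h
        have htK : t ∈ K := ⟨⟨huy.trans h1.le, h2⟩, h⟩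
        exact absurd (le_csSup hKbdd htK) (not_le.2 h1)
      have hderneg : ∀ t, u < t → t ≤ x → deriv v t < 0 := by
        intro t h1 h2
        by_contra h
        push_neg at h
        have hposd : 0 < deriv v t :=
          lt_of_le_of_ne h (Ne.symm (hne t (hgt t h1 h2)))
        have h0 : (0:ℝ) ∈ Icc (deriv v x) (deriv v t) := ⟨hneg.le, hposd.le⟩
        obtain ⟨s, hs, hs0⟩ :=
          intermediate_value_Icc' h2 (hdc.continuousOn) h0
        have hsu : u < s := lt_of_lt_of_le h1 hs.1
        exact hne s (hgt s hsu hs.2) hs0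
      rcases eq_or_lt_of_le hux with heq | hlt
      · -- u = x : slope contradiction at x
        have hvx_eq : v x = θ₁ * ε := le_antisymm (by rw [← heq]; exact hvu) hvx
        have hslope : Tendsto (slope v x) (𝓝[≠] x) (𝓝 (deriv v x)) :=
          hasDerivAt_iff_tendsto_slope.1 (hd x).hasDerivAt
        have hev : ∀ᶠ t in 𝓝[<] x, slope v x t < 0 := by
          have h1 : ∀ᶠ t in 𝓝[≠] x, slope v x t < 0 :=
            hslope.eventually_lt_const hneg
          exact nhdsWithin_mono x (fun t (ht : t ∈ Iio x) => ne_of_lt ht) h1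
        obtain ⟨l, hl, hIoo⟩ := mem_nhdsLT_iff_exists_Ioo_subset.1 hev
        obtain ⟨t, htK, hlt'⟩ := exists_lt_of_lt_csSup hKne
          (show l < sSup K by rw [← hu, heq]; exact hl)
        have hvt : v t < v x := by rw [hvx_eq]; exact htK.2
        have htx : t < x := lt_of_le_of_ne htK.1.2 (by
          intro hteq
          rw [hteq] at hvt
          exact lt_irrefl _ hvt)
        have hslt : slope v x t < 0 := hIoo ⟨hlt', htx⟩
        rw [slope_def_field] at hslt
        have hden : t - x < 0 := by linarith
        have hnum : 0 < v t - v x := by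
          rcases div_neg_iff.1 hslt with ⟨h1, _⟩ | ⟨_, h2⟩
          · exact h1
          · linarith
        linarith
      · -- u < x : v is strictly decreasing on [u, x], contradiction
        have hanti : StrictAntiOn v (Icc u x) := by
          apply strictAntiOn_of_deriv_neg (convex_Icc u x) hcont.continuousOn
          intro t ht
          rw [interior_Icc] at ht
          exact hderneg t ht.1 ht.2.le
        have := hanti ⟨le_rfl, hux⟩ ⟨hux, le_rfl⟩ hlt
        linarith
    · exact hposx
  -- Main estimate for two points in the set
  have hdist : ∀ a b, θ₁ * ε ≤ w a → w a ≤ θ₂ * ε → θ₁ * ε ≤ w b → w b ≤ θ₂ * ε →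
      a ≤ b → b - a ≤ ((θ₂ - θ₁) / m + 2) * ε := by
    intro a b ha1 ha2 hb1 hb2 hab
    obtain ⟨hay, hva1, hva2⟩ := hmem a ha1 ha2
    obtain ⟨hby, hvb1, hvb2⟩ := hmem b hb1 hb2
    -- v stays above θ₁ ε on [a, b]
    have hlow : ∀ t ∈ Icc a b, θ₁ * ε ≤ v t := by
      by_contra h
      push_neg at h
      obtain ⟨t₀, ht₀, hvt₀⟩ := h
      set K := {t | t ∈ Icc a b ∧ v t < θ₁ * ε} with hK
      have hKne : K.Nonempty := ⟨t₀, ht₀, hvt₀⟩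
      have hKbdd : BddBelow K := ⟨a, fun t ht => ht.1.1⟩
      set z := sInf K with hz
      have hza : a ≤ z := le_csInf hKne fun t ht => ht.1.1
      have hzb : z ≤ b := (csInf_le hKbdd ⟨ht₀, hvt₀⟩).trans ht₀.2
      have hvz_le : v z ≤ θ₁ * ε := by
        have hcl : z ∈ closure K := csInf_mem_closure hKne hKbdd
        exact closure_minimal (fun t ht => ht.2.le)
          (isClosed_le hcont continuous_const) hcl
      have hvz_ge : θ₁ * ε ≤ v z := by
        rcases eq_or_lt_of_le hza with heq | hlt
        · rw [← heq]; exact hva1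
        · have hsub : Ico a z ⊆ {t | θ₁ * ε ≤ v t} := by
            intro s hs
            by_contra hc
            simp only [mem_setOf_eq, not_le] at hc
            have hsK : s ∈ K := ⟨⟨hs.1, hs.2.le.trans hzb⟩, hc⟩
            exact absurd (csInf_le hKbdd hsK) (not_le.2 hs.2)
          have hclo : closure (Ico a z) ⊆ {t | θ₁ * ε ≤ v t} :=
            closure_minimal hsub (isClosed_le continuous_const hcont)
          have : z ∈ closure (Ico a z) := by
            rw [closure_Ico (ne_of_lt hlt)]
            exact ⟨hlt.le, le_rfl⟩
          exact hclo this
      have hvz : v z = θ₁ * ε := le_antisymm hvz_le hvz_ge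
      have hdz : 0 < deriv v z := hpos z (hay.trans_le hza) hvz_ge
      -- slope contradiction at z from the right
      have hslope : Tendsto (slope v z) (𝓝[≠] z) (𝓝 (deriv v z)) :=
        hasDerivAt_iff_tendsto_slope.1 (hd z).hasDerivAt
      have hev : ∀ᶠ t in 𝓝[>] z, 0 < slope v z t := by
        have h1 : ∀ᶠ t in 𝓝[≠] z, 0 < slope v z t :=
          hslope.eventually_const_lt hdz
        exact nhdsWithin_mono z (fun t (ht : t ∈ Ioi z) => ne_of_gt ht) h1
      obtain ⟨r, hr, hIoo⟩ := mem_nhdsGT_iff_exists_Ioo_subset.1 hev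
      obtain ⟨t, htK, htr⟩ := exists_lt_of_csInf_lt hKne
        (show sInf K < r from hr)
      have hzt : z ≤ t := csInf_le hKbdd htK
      have htz : z < t := lt_of_le_of_ne hzt (by
        intro hteq
        rw [← hteq] at htK
        exact absurd htK.2 (not_lt.2 hvz_ge))
      have hslt : 0 < slope v z t := hIoo ⟨htz, htr⟩
      rw [slope_def_field] at hslt
      have hnum : 0 < v t - v z := by
        have hden : 0 < t - z := by linarith
        rcases div_pos_iff.1 hslt with ⟨h1, _⟩ | ⟨_, h2⟩
        · exact h1
        · linarith
      have : v t < θ₁ * ε := htK.2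
      linarith [hvz]
    -- derivative bounded below by m on [a, b]
    have hder_ge : ∀ t ∈ Icc a b, m ≤ deriv v t := by
      intro t ht
      have h1 := hlow t ht
      have h2 := hpos t (hay.trans_le ht.1) h1
      have h3 := hsq t h1
      nlinarith [hm2, hq, hm0, sq_nonneg (deriv v t - m)]
    -- monotonicity of v t - m t
    have hg : MonotoneOn (fun t => v t - m * t) (Icc a b) := by
      apply monotoneOn_of_deriv_nonneg (convex_Icc a b)
      · exact (hcont.sub (continuous_const.mul continuous_id)).continuousOn
      · intro t _
        exact ((hd t).sub ((differentiable_const m).mul differentiable_id t)).differentiableWithinAt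
      · intro t ht
        rw [interior_Icc] at ht
        have hdm : HasDerivAt (fun s : ℝ => v s - m * s) (deriv v t - m) t := by
          have h1 : HasDerivAt (fun s : ℝ => m * s) m t := by
            simpa using (hasDerivAt_id t).const_mul m
          exact (hd t).hasDerivAt.sub h1
        rw [hdm.deriv]
        have := hder_ge t ⟨ht.1.le, ht.2.le⟩
        linarith
    have hkey : v a - m * a ≤ v b - m * b :=
      hg ⟨le_rfl, hab⟩ ⟨hab, le_rfl⟩ hab
    -- conclude
    have h1 : m * (b - a) ≤ v b - v a := by linarith
    have h2 : v b - v a ≤ (θ₂ - θ₁) * ε := by linarith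
    have h3 : b - a ≤ (θ₂ - θ₁) * ε / m := by
      rw [le_div_iff₀ hm0]
      have hcomm : (b - a) * m = m * (b - a) := mul_comm _ _
      linarith
    have h4 : ((θ₂ - θ₁) / m + 2) * ε = (θ₂ - θ₁) * ε / m + 2 * ε := by ring
    rw [h4]
    linarith
  -- assemble the diameter bound
  apply Metric.diam_le_of_forall_dist_le
  · have h0 : 0 ≤ (θ₂ - θ₁) / m := div_nonneg (by linarith) hm0.le
    exact mul_nonneg (by linarith) hε.le
  · intro x hx y hy
    obtain ⟨hx1, hx2⟩ := hx
    obtain ⟨hy1, hy2⟩ := hy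
    rcases le_total x y with hxy | hxy
    · rw [Real.dist_eq, abs_of_nonpos (by linarith)]
      have := hdist x y hx1 hx2 hy1 hy2 hxy
      linarith
    · rw [Real.dist_eq, abs_of_nonneg (by linarith)]
      have := hdist y x hy1 hy2 hx1 hx2 hxy
      linarith
end

section
/- There exists ε₀ ∈ (0,1) depending only on N and c₁ such that for every ε ∈ (0,ε₀), every solution u of Δu = (1/2)Φ'_ε(u), every point x₀ with u(x₀) ≤ θ₁ε, and every ball B_{ε^{3/4}}(x₀) ⊂ {u ≤ θ₁ε}, one has u ≤ 3θ₁ε·exp(−ε^{−1/4}/(4√c₁)) in B_{ε^{3/4}/2}(x₀). -/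
open Real Set Filter Metric MeasureTheory
open Topology

/-- Coordinate Laplacian on Euclidean space. -/
noncomputable def lap {N : ℕ} (u : EuclideanSpace ℝ (Fin N) → ℝ)
    (x : EuclideanSpace ℝ (Fin N)) : ℝ :=
  ∑ i : Fin N,
    fderiv ℝ (fun y => fderiv ℝ u y (EuclideanSpace.single i 1)) x (EuclideanSpace.single i 1)

lemma secondDerivTest {f : ℝ → ℝ} (hf : ContDiff ℝ 2 f) (hmax : IsLocalMax f 0) :
    deriv (deriv f) 0 ≤ 0 := by
  by_contra hpos
  push_neg at hpos
  have h2 : ContDiff ℝ 1 (deriv f) := by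
    have := (contDiff_succ_iff_deriv (n := 1)).mp (by norm_num at hf ⊢; exact hf)
    exact this.2.2
  have hdf : Differentiable ℝ f := hf.differentiable (by norm_num)
  have hdd : Differentiable ℝ (deriv f) := h2.differentiable (by norm_num)
  have h1 : deriv f 0 = 0 := hmax.deriv_eq_zero
  have hev : ∀ᶠ t in 𝓝 (0:ℝ), 0 < deriv (deriv f) t := by
    have hddc : Continuous (deriv (deriv f)) := by
      have := (contDiff_succ_iff_deriv (n := 0)).mp (by norm_num at h2 ⊢; exact h2)
      exact this.2.2.continuous
    exact (hddc.continuousAt.tendsto).eventually (eventually_gt_nhds hpos)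
  obtain ⟨δ₁, hδ₁, hball₁⟩ := Metric.eventually_nhds_iff.mp hev
  obtain ⟨δ₂, hδ₂, hball₂⟩ := Metric.eventually_nhds_iff.mp hmax
  have hmin : 0 < min δ₁ δ₂ := lt_min hδ₁ hδ₂
  have hδ : 0 < min δ₁ δ₂ / 2 := by positivity
  set δ := min δ₁ δ₂ / 2 with hδdef
  have hlt : ∀ t ∈ Icc (0:ℝ) δ, |t| < δ₁ ∧ |t| < δ₂ := by
    intro t ht
    have h1' : |t| ≤ δ := by rw [abs_of_nonneg ht.1]; exact ht.2
    have h2' : δ < min δ₁ δ₂ := by rw [hδdef]; linarith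
    exact ⟨lt_of_le_of_lt h1' (lt_of_lt_of_le h2' (min_le_left _ _)),
           lt_of_le_of_lt h1' (lt_of_lt_of_le h2' (min_le_right _ _))⟩
  have hmono : StrictMonoOn (deriv f) (Icc 0 δ) := by
    apply strictMonoOn_of_deriv_pos (convex_Icc _ _) (hdd.continuous.continuousOn)
    intro t ht
    rw [interior_Icc] at ht
    exact hball₁ (by simpa [Real.dist_eq] using (hlt t ⟨le_of_lt ht.1, le_of_lt ht.2⟩).1)
  have hmono2 : StrictMonoOn f (Icc 0 δ) := by
    apply strictMonoOn_of_deriv_pos (convex_Icc _ _) (hdf.continuous.continuousOn)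
    intro t ht
    rw [interior_Icc] at ht
    have : deriv f 0 < deriv f t :=
      hmono ⟨le_rfl, le_of_lt hδ⟩ ⟨le_of_lt ht.1, le_of_lt ht.2⟩ ht.1
    rw [h1] at this; exact this
  have hflt : f 0 < f δ := hmono2 ⟨le_rfl, le_of_lt hδ⟩ ⟨le_of_lt hδ, le_rfl⟩ hδ
  have hfle : f δ ≤ f 0 := by
    apply hball₂
    simpa [Real.dist_eq] using (hlt δ ⟨le_of_lt hδ, le_rfl⟩).2
  linarith

variable {E : Type*} [NormedAddCommGroup E] [NormedSpace ℝ E]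

lemma lineSecondDeriv (v : E → ℝ) (hv : ContDiff ℝ 2 v) (p e : E) :
    deriv (deriv (fun t : ℝ => v (p + t • e))) 0
      = fderiv ℝ (fun y => fderiv ℝ v y e) p e := by
  have hγ : ∀ t : ℝ, HasDerivAt (fun t : ℝ => p + t • e) e t := by
    intro t
    simpa using ((hasDerivAt_id t).smul_const e).const_add p
  have hdv : Differentiable ℝ v := hv.differentiable (by norm_num)
  have hg : ContDiff ℝ 1 (fun y => fderiv ℝ v y e) := by
    have h1 : ContDiff ℝ 1 (fderiv ℝ v) := hv.fderiv_right (by norm_num)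
    exact h1.clm_apply contDiff_const
  have hstep1 : deriv (fun t : ℝ => v (p + t • e))
      = fun t : ℝ => fderiv ℝ v (p + t • e) e := by
    funext t
    exact ((hdv _).hasFDerivAt.comp_hasDerivAt t (hγ t)).deriv
  rw [hstep1]
  have : HasDerivAt (fun t : ℝ => fderiv ℝ v (p + t • e) e)
      (fderiv ℝ (fun y => fderiv ℝ v y e) (p + (0:ℝ) • e) e) 0 :=
    ((hg.differentiable (by norm_num)) _).hasFDerivAt.comp_hasDerivAt 0 (hγ 0)
  simpa using this.deriv
lemma lap_nonpos_at_localMax {N : ℕ} (v : EuclideanSpace ℝ (Fin N) → ℝ)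
    (hv : ContDiff ℝ 2 v) (p : EuclideanSpace ℝ (Fin N)) (hmax : IsLocalMax v p) :
    lap v p ≤ 0 := by
  apply Finset.sum_nonpos
  intro i _
  set e := EuclideanSpace.single i (1:ℝ)
  rw [← lineSecondDeriv v hv p e]
  apply secondDerivTest
  · exact hv.comp (contDiff_const.add (contDiff_id.smul contDiff_const))
  · have hγc : ContinuousAt (fun t : ℝ => p + t • e) 0 :=
      (continuous_const.add (continuous_id.smul continuous_const)).continuousAt
    have h0 : p + (0:ℝ) • e = p := by simp
    have := hγc.tendsto
    rw [h0] at this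
    have hev := this.eventually hmax
    simpa [IsLocalMax, IsMaxFilter, h0] using hev

lemma lap_sub {N : ℕ} (u w : EuclideanSpace ℝ (Fin N) → ℝ)
    (hu : ContDiff ℝ 2 u) (hw : ContDiff ℝ 2 w) (x : EuclideanSpace ℝ (Fin N)) :
    lap (fun y => u y - w y) x = lap u x - lap w x := by
  unfold lap
  rw [← Finset.sum_sub_distrib]
  apply Finset.sum_congr rfl
  intro i _
  set e := EuclideanSpace.single i (1:ℝ)
  have hgu : ContDiff ℝ 1 (fun y => fderiv ℝ u y e) :=
    (hu.fderiv_right (by norm_num)).clm_apply contDiff_const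
  have hgw : ContDiff ℝ 1 (fun y => fderiv ℝ w y e) :=
    (hw.fderiv_right (by norm_num)).clm_apply contDiff_const
  have h1 : (fun y => fderiv ℝ (fun z => u z - w z) y e)
      = fun y => fderiv ℝ u y e - fderiv ℝ w y e := by
    funext y
    rw [fderiv_fun_sub (hu.differentiable (by norm_num) y) (hw.differentiable (by norm_num) y)]
    rfl
  rw [h1, fderiv_fun_sub ((hgu.differentiable (by norm_num)) x) ((hgw.differentiable (by norm_num)) x)]
  rfl
section barrier
variable {N : ℕ} (c : EuclideanSpace ℝ (Fin N)) (β A : ℝ) (m : ℕ)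

lemma barrier_contDiff :
    ContDiff ℝ 2 (fun y : EuclideanSpace ℝ (Fin N) =>
      A * (1 + β * ∑ j, (y j - c j)^2) ^ m) := by
  refine contDiff_const.mul (ContDiff.pow ?_ m)
  refine contDiff_const.add (contDiff_const.mul ?_)
  exact ContDiff.sum fun j _ =>
    ((EuclideanSpace.proj j : EuclideanSpace ℝ (Fin N) →L[ℝ] ℝ).contDiff.sub
      contDiff_const).pow 2

lemma barrier_lap (x : EuclideanSpace ℝ (Fin N)) :
    lap (fun y => A * (1 + β * ∑ j, (y j - c j)^2) ^ m) x
      = 2*A*β*(m:ℝ)*(N:ℝ) * (1 + β * ∑ j, (x j - c j)^2) ^ (m-1)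
        + 4*A*β^2*(m:ℝ)*((m-1 : ℕ):ℝ) * (1 + β * ∑ j, (x j - c j)^2) ^ (m-2)
          * (∑ j, (x j - c j)^2) := by
  set S : EuclideanSpace ℝ (Fin N) → ℝ := fun y => ∑ j, (y j - c j)^2 with hS
  set h : EuclideanSpace ℝ (Fin N) → ℝ := fun y => 1 + β * S y with hh
  have hSd : ∀ y, HasFDerivAt S
      (∑ j, ((2:ℝ) * (y j - c j)^1) • (EuclideanSpace.proj j
        : EuclideanSpace ℝ (Fin N) →L[ℝ] ℝ)) y := by
    intro y
    apply HasFDerivAt.fun_sum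
    intro j _
    have h1 : HasFDerivAt (fun z : EuclideanSpace ℝ (Fin N) => z j - c j)
        ((EuclideanSpace.proj j : EuclideanSpace ℝ (Fin N) →L[ℝ] ℝ)) y :=
      ((EuclideanSpace.proj j : EuclideanSpace ℝ (Fin N) →L[ℝ] ℝ).hasFDerivAt (x := y)).sub_const (c j)
    exact (hasDerivAt_pow 2 (y j - c j)).comp_hasFDerivAt y h1
  have hhd : ∀ y, HasFDerivAt h
      (β • ∑ j, ((2:ℝ) * (y j - c j)^1) • (EuclideanSpace.proj j
        : EuclideanSpace ℝ (Fin N) →L[ℝ] ℝ)) y := fun y =>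
    ((hSd y).const_mul β).const_add 1
  have heval : ∀ (y : EuclideanSpace ℝ (Fin N)) (i : Fin N),
      (∑ j, ((2:ℝ) * (y j - c j)^1) • (EuclideanSpace.proj j
        : EuclideanSpace ℝ (Fin N) →L[ℝ] ℝ)) (EuclideanSpace.single i 1)
      = 2 * (y i - c i) := by
    intro y i
    rw [ContinuousLinearMap.sum_apply]
    simp only [ContinuousLinearMap.smul_apply, smul_eq_mul]
    rw [Finset.sum_eq_single i]
    · simp [EuclideanSpace.single_apply]
    · intro j _ hj
      simp [EuclideanSpace.single_apply, hj]
    · simp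
  have hfderiv1 : ∀ (y : EuclideanSpace ℝ (Fin N)) (i : Fin N),
      fderiv ℝ (fun z => A * h z ^ m) y (EuclideanSpace.single i 1)
        = (2*A*β*(m:ℝ)) * ((y i - c i) * h y ^ (m-1)) := by
    intro y i
    have hw : HasFDerivAt (fun z => A * h z ^ m)
        (A • (((m:ℝ) * h y ^ (m-1)) • (β • ∑ j, ((2:ℝ) * (y j - c j)^1) •
          (EuclideanSpace.proj j : EuclideanSpace ℝ (Fin N) →L[ℝ] ℝ)))) y :=
      ((hasDerivAt_pow m (h y)).comp_hasFDerivAt y (hhd y)).const_mul A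
    rw [hw.fderiv]
    simp only [ContinuousLinearMap.smul_apply, smul_eq_mul]
    rw [heval y i]
    ring
  unfold lap
  have hterm : ∀ i : Fin N,
      fderiv ℝ (fun y => fderiv ℝ (fun z => A * h z ^ m) y (EuclideanSpace.single i 1)) x
        (EuclideanSpace.single i 1)
      = (2*A*β*(m:ℝ)) * ((x i - c i) * (((m-1:ℕ):ℝ) * h x ^ (m-2)) * (β * (2 * (x i - c i)))
          + h x ^ (m-1) * 1) := by
    intro i
    have hrw : (fun y => fderiv ℝ (fun z => A * h z ^ m) y (EuclideanSpace.single i 1))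
        = fun y => (2*A*β*(m:ℝ)) * ((y i - c i) * h y ^ (m-1)) := funext fun y => hfderiv1 y i
    rw [hrw]
    have hf : HasFDerivAt (fun y : EuclideanSpace ℝ (Fin N) => y i - c i)
        ((EuclideanSpace.proj i : EuclideanSpace ℝ (Fin N) →L[ℝ] ℝ)) x :=
      ((EuclideanSpace.proj i : EuclideanSpace ℝ (Fin N) →L[ℝ] ℝ).hasFDerivAt (x := x)).sub_const (c i)
    have hg : HasFDerivAt (fun y : EuclideanSpace ℝ (Fin N) => h y ^ (m-1))
        ((((m-1:ℕ):ℝ) * h x ^ (m-1-1)) • (β • ∑ j, ((2:ℝ) * (x j - c j)^1) •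
          (EuclideanSpace.proj j : EuclideanSpace ℝ (Fin N) →L[ℝ] ℝ))) x :=
      (hasDerivAt_pow (m-1) (h x)).comp_hasFDerivAt x (hhd x)
    have hmul : HasFDerivAt (fun y => 2*A*β*(m:ℝ) * ((y i - c i) * h y ^ (m-1))) _ x :=
      (hf.mul hg).const_mul (2*A*β*(m:ℝ))
    rw [hmul.fderiv]
    have hm2 : m - 1 - 1 = m - 2 := by omega
    simp only [ContinuousLinearMap.smul_apply, ContinuousLinearMap.add_apply, smul_eq_mul, hm2]
    rw [heval x i]
    have hproj : (EuclideanSpace.proj i : EuclideanSpace ℝ (Fin N) →L[ℝ] ℝ)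
        (EuclideanSpace.single i 1) = 1 := by
      simp [EuclideanSpace.single_apply]
    rw [hproj]
    ring
  rw [Finset.sum_congr rfl (fun i _ => hterm i)]
  have hSsum : ∑ i : Fin N, (x i - c i) * (x i - c i) = S x := by
    rw [hS]; exact Finset.sum_congr rfl fun i _ => by ring
  have expand : ∀ i : Fin N,
      (2*A*β*(m:ℝ)) * ((x i - c i) * (((m-1:ℕ):ℝ) * h x ^ (m-2)) * (β * (2 * (x i - c i)))
          + h x ^ (m-1) * 1)
      = (4*A*β^2*(m:ℝ)*((m-1:ℕ):ℝ) * h x ^ (m-2)) * ((x i - c i) * (x i - c i))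
        + (2*A*β*(m:ℝ)) * h x ^ (m-1) := fun i => by ring
  rw [Finset.sum_congr rfl (fun i _ => expand i), Finset.sum_add_distrib,
    ← Finset.mul_sum, hSsum]
  simp only [Finset.sum_const, Finset.card_univ, Fintype.card_fin, nsmul_eq_mul]
  ring

end barrier

lemma core_ineq (a mm n : ℝ) (ha : 0 < a) (hn1 : 1 ≤ n) (hmm : mm < a + 1) (hm0 : 0 ≤ mm)
    (hN : 24*(n+2) < a) : mm^2 + 2*n*mm ≤ 16*a^2/9 := by
  have h1 : n ≤ a/24 - 2 := by linarith
  have h2 : n*mm ≤ (a/24-2)*(a+1) := by nlinarith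
  have h3 : mm^2 ≤ (a+1)^2 := by nlinarith
  nlinarith [sq_nonneg a, ha]

lemma two_fifths_le_exp : (2:ℝ)/5 ≤ Real.exp (-(2/3)) := by
  have key : Real.exp (2/3) ≤ 5/2 := by
    have h3 : Real.exp (2/3) ^ 3 = Real.exp 2 := by
      rw [← Real.exp_nat_mul]; norm_num
    have h2 : Real.exp 2 = Real.exp 1 * Real.exp 1 := by
      rw [← Real.exp_add]; norm_num
    by_contra hcon
    push_neg at hcon
    have h4 : ((5:ℝ)/2)^3 < Real.exp (2/3) ^ 3 :=
      pow_lt_pow_left₀ hcon (by norm_num) (by norm_num)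
    rw [h3, h2] at h4
    nlinarith [Real.exp_one_lt_d9, Real.exp_pos 1]
  have h0 : 0 < Real.exp (2/3) := Real.exp_pos _
  rw [Real.exp_neg, le_inv_comm₀ (by norm_num) h0]
  calc Real.exp (2/3) ≤ 5/2 := key
    _ = ((2:ℝ)/5)⁻¹ := by norm_num

lemma final_est (θ₁ ε sq σ A : ℝ) (m : ℕ) (hθ : 0 < θ₁) (hε : 0 < ε) (hsq : 0 < sq)
    (hσ : 0 < σ) (hA : 0 < A) (hA5 : A * 5 ^ m = θ₁ * ε) (hm : 3/8*σ/sq ≤ (m:ℝ)) :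
    A * 2 ^ m ≤ 3 * θ₁ * ε * Real.exp (-σ / (4 * sq)) := by
  have h5 : (0:ℝ) < 5 ^ m := by positivity
  have h25 : A * 2 ^ m = θ₁ * ε * ((2:ℝ)/5) ^ m := by
    rw [div_pow, ← hA5]
    field_simp
  rw [h25]
  have h1 : ((2:ℝ)/5) ^ m ≤ Real.exp (-(2/3)) ^ m :=
    pow_le_pow_left₀ (by norm_num) two_fifths_le_exp m
  have h2 : Real.exp (-(2/3)) ^ m = Real.exp (-(2/3) * m) := by
    rw [← Real.exp_nat_mul]; ring_nf
  have h3 : -(2/3) * (m:ℝ) ≤ -σ / (4 * sq) := by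
    have hm' : 3/8*σ ≤ (m:ℝ) * sq := by
      rw [div_le_iff₀ hsq] at hm; linarith
    have : σ / (4 * sq) ≤ 2/3 * (m:ℝ) := by
      rw [div_le_iff₀ (by positivity)]
      nlinarith [hm', hsq]
    calc -(2/3) * (m:ℝ) = -(2/3 * (m:ℝ)) := by ring
      _ ≤ -(σ / (4 * sq)) := neg_le_neg this
      _ = -σ / (4 * sq) := by rw [neg_div]
  calc θ₁ * ε * ((2:ℝ)/5) ^ m ≤ θ₁ * ε * Real.exp (-(2/3) * m) := by
        apply mul_le_mul_of_nonneg_left ?_ (by positivity)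
        rw [← h2]; exact h1
    _ ≤ θ₁ * ε * Real.exp (-σ / (4 * sq)) :=
        mul_le_mul_of_nonneg_left (Real.exp_le_exp.mpr h3) (by positivity)
    _ ≤ 3 * θ₁ * ε * Real.exp (-σ / (4 * sq)) := by
        nlinarith [mul_pos (mul_pos hθ hε) (Real.exp_pos (-σ / (4 * sq)))]
lemma comparison {N : ℕ} (c₁ ε θ₁ R β A : ℝ) (m : ℕ)
    (hc₁ : 0 < c₁) (hε : 0 < ε) (hθ₁ : 0 < θ₁) (hR : 0 < R) (hβ : 0 < β)
    (hm : 2 ≤ m)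
    (hβR : β * R ^ 2 = 4)
    (hA : 0 < A) (hA5 : A * 5 ^ m = θ₁ * ε)
    (hkey : β * ((m:ℝ)^2 + 2*(N:ℝ)*(m:ℝ)) ≤ 1/(c₁ * ε^2))
    (Φ : ℝ → ℝ)
    (hΦ' : ∀ s ∈ Icc (0:ℝ) θ₁, (1/c₁) * s ≤ (1/2) * deriv Φ s)
    (u : EuclideanSpace ℝ (Fin N) → ℝ) (hu : ContDiff ℝ 2 u) (hu0 : ∀ y, 0 ≤ u y)
    (x₀ : EuclideanSpace ℝ (Fin N))
    (hpde : ∀ y ∈ ball x₀ R, lap u y = (1/2) * ((1/ε) * deriv Φ (u y / ε)))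
    (hKu : ∀ y ∈ closedBall x₀ R, u y ≤ θ₁ * ε) :
    ∀ y ∈ closedBall x₀ R, u y ≤ A * (1 + β * ∑ j, (y j - x₀ j)^2) ^ m := by
  have hS_dist : ∀ y : EuclideanSpace ℝ (Fin N),
      (∑ j, (y j - x₀ j)^2) = dist y x₀ ^ 2 := by
    intro y
    rw [EuclideanSpace.dist_eq, Real.sq_sqrt (by positivity)]
    simp only [Real.dist_eq, sq_abs]
  have hS_nonneg : ∀ y : EuclideanSpace ℝ (Fin N), (0:ℝ) ≤ ∑ j, (y j - x₀ j)^2 :=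
    fun y => by positivity
  have hh1 : ∀ y : EuclideanSpace ℝ (Fin N), (1:ℝ) ≤ 1 + β * ∑ j, (y j - x₀ j)^2 :=
    fun y => by nlinarith [hS_nonneg y]
  set w : EuclideanSpace ℝ (Fin N) → ℝ :=
    fun y => A * (1 + β * ∑ j, (y j - x₀ j)^2) ^ m with hwdef
  have hwCD : ContDiff ℝ 2 w := barrier_contDiff x₀ β A m
  set v : EuclideanSpace ℝ (Fin N) → ℝ := fun y => u y - w y with hvdef
  obtain ⟨p, hpK, hpmax'⟩ := (isCompact_closedBall x₀ R).exists_isMaxOn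
    ⟨x₀, mem_closedBall_self hR.le⟩ (hu.sub hwCD).continuous.continuousOn
  have hpmax : ∀ y ∈ closedBall x₀ R, v y ≤ v p := fun y hy => hpmax' hy
  suffices hvp : v p ≤ 0 by
    intro y hy
    have h1 := hpmax y hy
    simp only [hvdef] at h1
    have : u y - w y ≤ 0 := le_trans h1 hvp
    simpa [hwdef] using this
  by_contra hvp'
  push_neg at hvp'
  -- p is interior
  have hp_int : dist p x₀ < R := by
    rcases lt_or_eq_of_le (mem_closedBall.mp hpK) with h | h
    · exact h
    · exfalso
      have hSp : (∑ j, (p j - x₀ j)^2) = R ^ 2 := by rw [hS_dist, h]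
      have hwp : w p = θ₁ * ε := by
        simp only [hwdef, hSp]
        have h5 : 1 + β * R ^ 2 = 5 := by rw [hβR]; norm_num
        rw [h5, hA5]
      have hup : u p ≤ θ₁ * ε := hKu p hpK
      simp only [hvdef] at hvp'
      linarith
  have hp_ball : p ∈ ball x₀ R := mem_ball.mpr hp_int
  have hloc : IsLocalMax v p :=
    (isOpen_ball.eventually_mem hp_ball).mono
      fun y hy => hpmax y (ball_subset_closedBall hy)
  have hlap_nonpos : lap v p ≤ 0 := lap_nonpos_at_localMax v (hu.sub hwCD) p hloc
  have hlap_split : lap v p = lap u p - lap w p := lap_sub u w hu hwCD p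
  have hup_le : u p ≤ θ₁ * ε := hKu p hpK
  have hs_mem : u p / ε ∈ Icc (0:ℝ) θ₁ :=
    ⟨div_nonneg (hu0 p) hε.le, by rw [div_le_iff₀ hε]; linarith⟩
  have hlapu : u p / (c₁ * ε^2) ≤ lap u p := by
    rw [hpde p hp_ball]
    have h1 := hΦ' (u p / ε) hs_mem
    have h2 : (1:ℝ)/c₁ * (u p / ε) * (1/ε) ≤ 1/2 * deriv Φ (u p / ε) * (1/ε) :=
      mul_le_mul_of_nonneg_right h1 (by positivity)
    calc u p / (c₁ * ε^2) = 1/c₁ * (u p / ε) * (1/ε) := by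
          rw [one_div, one_div, div_eq_mul_inv, div_eq_mul_inv, mul_inv, sq, mul_inv]
          ring
      _ ≤ 1/2 * deriv Φ (u p / ε) * (1/ε) := h2
      _ = 1/2 * (1/ε * deriv Φ (u p / ε)) := by ring
  have hlapw : lap w p ≤ w p / (c₁ * ε^2) := by
    have hlw := barrier_lap x₀ β A m p
    simp only [hwdef]
    rw [hlw]
    set Sp : ℝ := ∑ j, (p j - x₀ j)^2 with hSpdef
    set hp : ℝ := 1 + β * Sp with hhp
    have hp1 : (1:ℝ) ≤ hp := hh1 p
    have hp0 : (0:ℝ) < hp := by linarith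
    have hSp0 : 0 ≤ Sp := hS_nonneg p
    have hpow1 : hp ^ (m-1) ≤ hp ^ m := pow_le_pow_right₀ hp1 (Nat.sub_le m 1)
    have hterm1 : 2*A*β*(m:ℝ)*(N:ℝ) * hp ^ (m-1) ≤ 2*A*β*(m:ℝ)*(N:ℝ) * hp ^ m :=
      mul_le_mul_of_nonneg_left hpow1 (by positivity)
    have h4βS : 4 * (β * Sp) ≤ hp ^ 2 := by
      rw [hhp]; nlinarith [sq_nonneg (1 - β * Sp), hβ.le, hSp0]
    have hterm2 : 4*A*β^2*(m:ℝ)*((m-1:ℕ):ℝ) * hp ^ (m-2) * Sp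
        ≤ A*β*(m:ℝ)*((m-1:ℕ):ℝ) * hp ^ m := by
      have hpow2 : hp ^ (m-2) * hp ^ 2 = hp ^ m := by
        rw [← pow_add]; congr 1; omega
      have hc : (0:ℝ) ≤ A*β*(m:ℝ)*((m-1:ℕ):ℝ) * hp ^ (m-2) := by positivity
      calc 4*A*β^2*(m:ℝ)*((m-1:ℕ):ℝ) * hp ^ (m-2) * Sp
          = (A*β*(m:ℝ)*((m-1:ℕ):ℝ) * hp ^ (m-2)) * (4 * (β * Sp)) := by ring
        _ ≤ (A*β*(m:ℝ)*((m-1:ℕ):ℝ) * hp ^ (m-2)) * hp ^ 2 :=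
            mul_le_mul_of_nonneg_left h4βS hc
        _ = A*β*(m:ℝ)*((m-1:ℕ):ℝ) * hp ^ m := by rw [mul_assoc, hpow2]
    have hm1N : ((m-1:ℕ):ℝ) ≤ (m:ℝ) := by
      exact_mod_cast Nat.cast_le.mpr (Nat.sub_le m 1)
    have hmpos : (0:ℝ) ≤ (m:ℝ) := Nat.cast_nonneg m
    have hsum : A*β*(m:ℝ)*((m-1:ℕ):ℝ) * hp ^ m ≤ A*β*(m:ℝ)*(m:ℝ) * hp ^ m := by
      apply mul_le_mul_of_nonneg_right ?_ (by positivity)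
      exact mul_le_mul_of_nonneg_left hm1N (by positivity)
    have hfinal : A * (β * ((m:ℝ)^2 + 2*(N:ℝ)*(m:ℝ))) * hp ^ m
        ≤ A * (1/(c₁ * ε^2)) * hp ^ m :=
      mul_le_mul_of_nonneg_right (mul_le_mul_of_nonneg_left hkey hA.le) (by positivity)
    have heq : A*β*(m:ℝ)*(m:ℝ) * hp ^ m + 2*A*β*(m:ℝ)*(N:ℝ) * hp ^ m
        = A * (β * ((m:ℝ)^2 + 2*(N:ℝ)*(m:ℝ))) * hp ^ m := by ring
    calc 2*A*β*(m:ℝ)*(N:ℝ) * hp ^ (m-1)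
          + 4*A*β^2*(m:ℝ)*((m-1:ℕ):ℝ) * hp ^ (m-2) * Sp
        ≤ A * (β * ((m:ℝ)^2 + 2*(N:ℝ)*(m:ℝ))) * hp ^ m := by
          rw [← heq]; linarith
      _ ≤ A * (1/(c₁ * ε^2)) * hp ^ m := hfinal
      _ = A * hp ^ m / (c₁ * ε^2) := by ring
  have hwp0 : 0 ≤ w p := by
    simp only [hwdef]
    have := hh1 p
    positivity
  simp only [hvdef] at hvp' hlap_nonpos hlap_split
  have hchain : u p / (c₁ * ε^2) ≤ w p / (c₁ * ε^2) := by
    calc u p / (c₁ * ε^2) ≤ lap u p := hlapu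
      _ ≤ lap w p := by
          have := hlap_split
          have := hlap_nonpos
          linarith [lap_sub u w hu hwCD p]
      _ ≤ w p / (c₁ * ε^2) := hlapw
  have hpos : (0:ℝ) < c₁ * ε^2 := by positivity
  rw [div_le_div_iff_of_pos_right hpos] at hchain
  linarith

set_option maxHeartbeats 800000 in
/-- exponential decay of solutions of Δu = (1/2)Φ'_ε(u) in the region
{u ≤ θ₁ε}: there is ε₀ ∈ (0,1), depending only on N and c₁, such that if
B_{ε^{3/4}}(x₀) ⊆ {u ≤ θ₁ε}, then u ≤ 3θ₁ε·e^{−ε^{−1/4}/(4√c₁)} on B_{ε^{3/4}/2}(x₀). -/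
theorem statement11
    (N : ℕ) (hN : 1 ≤ N) (c₁ : ℝ) (hc₁ : 0 < c₁) :
    ∃ ε₀ ∈ Ioo (0:ℝ) 1,
      ∀ θ₁ : ℝ, 0 < θ₁ →
      ∀ Φ : ℝ → ℝ, ContDiff ℝ 1 Φ →
        (∀ s ∈ Icc (0:ℝ) θ₁,
          (1/c₁) * s ≤ (1/2) * deriv Φ s ∧ (1/2) * deriv Φ s ≤ c₁ * s) →
      ∀ ε : ℝ, ε ∈ Ioo (0:ℝ) ε₀ →
      ∀ u : EuclideanSpace ℝ (Fin N) → ℝ, ContDiff ℝ 2 u → (∀ x, 0 ≤ u x) →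
      ∀ x₀ : EuclideanSpace ℝ (Fin N),
        (∀ x ∈ ball x₀ (ε ^ ((3:ℝ)/4)), lap u x = (1/2) * ((1/ε) * deriv Φ (u x / ε))) →
        u x₀ ≤ θ₁ * ε →
        (ball x₀ (ε ^ ((3:ℝ)/4)) ⊆ {x | u x ≤ θ₁ * ε}) →
        ∀ x ∈ ball x₀ (ε ^ ((3:ℝ)/4) / 2),
          u x ≤ 3 * θ₁ * ε * Real.exp (-(ε ^ (-(1:ℝ)/4)) / (4 * Real.sqrt c₁)) := by
  obtain ⟨sq, hsqdef⟩ : ∃ s, s = Real.sqrt c₁ := ⟨_, rfl⟩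
  have hsq : 0 < sq := hsqdef ▸ Real.sqrt_pos.mpr hc₁
  have hsq2 : sq ^ 2 = c₁ := hsqdef ▸ Real.sq_sqrt hc₁.le
  obtain ⟨z, hzdef⟩ : ∃ t : ℝ, t = 1 + sq * (64 * ((N:ℝ) + 2)) := ⟨_, rfl⟩
  have hz1 : 1 < z := by
    have h1 : 0 < sq * (64 * ((N:ℝ)+2)) := by positivity
    rw [hzdef]; linarith
  have hz0 : 0 < z := by linarith
  refine ⟨min (1/2) (z⁻¹ ^ 4), ⟨by positivity,
    lt_of_le_of_lt (min_le_left _ _) (by norm_num)⟩, ?_⟩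
  intro θ₁ hθ₁ Φ hΦ hΦ' ε hε u hu hu0 x₀ hpde hux₀ hball x hx
  obtain ⟨hε0, hεlt⟩ := hε
  have hεz : ε < z⁻¹ ^ 4 := lt_of_lt_of_le hεlt (min_le_right _ _)
  obtain ⟨σ, hσdef⟩ : ∃ s : ℝ, s = ε ^ (-(1:ℝ)/4) := ⟨_, rfl⟩
  obtain ⟨R, hRdef⟩ : ∃ r : ℝ, r = ε ^ ((3:ℝ)/4) := ⟨_, rfl⟩
  rw [← hRdef] at hpde hball hx
  rw [← hσdef, ← hsqdef]
  have hR : 0 < R := hRdef ▸ Real.rpow_pos_of_pos hε0 _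
  have hσ0 : 0 < σ := hσdef ▸ Real.rpow_pos_of_pos hε0 _
  -- z < σ
  have hσz : z < σ := by
    have h14 : ε ^ ((1:ℝ)/4) < z⁻¹ := by
      have h := Real.rpow_lt_rpow hε0.le hεz (by norm_num : (0:ℝ) < 1/4)
      calc ε ^ ((1:ℝ)/4) < (z⁻¹ ^ 4) ^ ((1:ℝ)/4) := h
        _ = z⁻¹ := by
          rw [← Real.rpow_natCast z⁻¹ 4, ← Real.rpow_mul (by positivity)]
          norm_num
    have hσeq : σ = (ε ^ ((1:ℝ)/4))⁻¹ := by
      rw [hσdef, ← Real.rpow_neg hε0.le]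
      norm_num
    have h0 : 0 < ε ^ ((1:ℝ)/4) := Real.rpow_pos_of_pos hε0 _
    rw [hσeq]
    calc z = (z⁻¹)⁻¹ := by rw [inv_inv]
      _ < (ε ^ ((1:ℝ)/4))⁻¹ := by exact inv_strictAnti₀ h0 h14
  -- identities
  have hR2σ2 : R ^ 2 * σ ^ 2 = ε := by
    rw [hRdef, hσdef,
      ← Real.rpow_natCast (ε ^ ((3:ℝ)/4)) 2, ← Real.rpow_mul hε0.le,
      ← Real.rpow_natCast (ε ^ (-(1:ℝ)/4)) 2, ← Real.rpow_mul hε0.le,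
      ← Real.rpow_add hε0]
    norm_num
  have hσ4 : ε * σ ^ 4 = 1 := by
    rw [hσdef, ← Real.rpow_natCast (ε ^ (-(1:ℝ)/4)) 4, ← Real.rpow_mul hε0.le]
    rw [show (-(1:ℝ)/4 * (4:ℕ)) = -1 by norm_num]
    rw [show (-1:ℝ) = ((-1 : ℤ):ℝ) by norm_num, Real.rpow_intCast, zpow_neg_one]
    exact mul_inv_cancel₀ hε0.ne'
  -- m
  obtain ⟨m, hm1, hm2⟩ : ∃ m : ℕ, 3/8*σ/sq ≤ (m:ℝ) ∧ (m:ℝ) < 3/8*σ/sq + 1 :=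
    ⟨⌈3/8*σ/sq⌉₊, Nat.le_ceil _, Nat.ceil_lt_add_one (by positivity)⟩
  have haN : 24 * ((N:ℝ) + 2) < 3/8*σ/sq := by
    have h1 : (3:ℝ)/8 * z / sq = 3/(8*sq) + 24 * ((N:ℝ)+2) := by
      rw [hzdef]; field_simp; ring
    have h2 : (3:ℝ)/8 * z / sq < 3/8*σ/sq := by gcongr
    rw [h1] at h2
    have h3 : (0:ℝ) < 3/(8*sq) := by positivity
    linarith
  have hN1 : (1:ℝ) ≤ (N:ℝ) := by exact_mod_cast hN
  have hm_ge2 : 2 ≤ m := by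
    have h : (2:ℝ) ≤ (m:ℝ) := by linarith
    exact_mod_cast h
  have hm0 : (0:ℝ) ≤ (m:ℝ) := Nat.cast_nonneg m
  -- key inequality
  have hkey : (4 / R^2) * ((m:ℝ)^2 + 2*(N:ℝ)*(m:ℝ)) ≤ 1/(c₁ * ε^2) := by
    have hcore : (m:ℝ)^2 + 2*(N:ℝ)*(m:ℝ) ≤ 16*(3/8*σ/sq)^2/9 :=
      core_ineq _ _ _ (by positivity) hN1 hm2 hm0 haN
    have hc₁a : c₁ * (3/8*σ/sq)^2 = 9/64 * σ^2 := by
      rw [← hsq2]; field_simp; ring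
    rw [div_mul_eq_mul_div, div_le_div_iff₀ (by positivity) (by positivity)]
    calc 4 * ((m:ℝ)^2 + 2*(N:ℝ)*(m:ℝ)) * (c₁ * ε ^ 2)
        ≤ 4 * (16*(3/8*σ/sq)^2/9) * (c₁ * ε ^ 2) := by
          have hpos : (0:ℝ) < c₁ * ε^2 := by positivity
          have h := mul_le_mul_of_nonneg_right
            (by linarith [hcore] :
              4 * ((m:ℝ)^2 + 2*(N:ℝ)*(m:ℝ)) ≤ 4 * (16*(3/8*σ/sq)^2/9)) hpos.le
          linarith
      _ = (c₁ * (3/8*σ/sq)^2) * (64/9) * ε^2 := by ring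
      _ = σ^2 * ε^2 := by rw [hc₁a]; ring
      _ = R^2 * (ε * σ^4) := by
          calc σ^2 * ε^2 = σ^2 * ε * ε := by ring
            _ = σ^2 * ε * (R^2 * σ^2) := by rw [hR2σ2]
            _ = R^2 * (ε * σ^4) := by ring
      _ = 1 * R^2 := by rw [hσ4]; ring
  -- barrier constants
  have h5m : (0:ℝ) < 5 ^ m := by positivity
  have hA : (0:ℝ) < θ₁ * ε / 5 ^ m := by positivity
  have hA5 : (θ₁ * ε / 5 ^ m) * 5 ^ m = θ₁ * ε := div_mul_cancel₀ _ h5m.ne'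
  have hβ : (0:ℝ) < 4 / R^2 := by positivity
  have hβR : (4 / R^2) * R^2 = 4 := div_mul_cancel₀ _ (by positivity)
  -- u ≤ θ₁ε on closed ball
  have hKu : ∀ y ∈ closedBall x₀ R, u y ≤ θ₁ * ε := by
    have hcl : IsClosed {y : EuclideanSpace ℝ (Fin N) | u y ≤ θ₁ * ε} :=
      isClosed_le hu.continuous continuous_const
    intro y hy
    rw [(closure_ball x₀ hR.ne').symm] at hy
    exact (hcl.closure_subset_iff.mpr hball) hy
  -- comparison
  have hcomp := comparison c₁ ε θ₁ R (4 / R^2) (θ₁ * ε / 5 ^ m) m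
    hc₁ hε0 hθ₁ hR hβ hm_ge2 hβR hA hA5 hkey Φ (fun s hs => (hΦ' s hs).1)
    u hu hu0 x₀ hpde hKu
  -- conclude
  have hxK : x ∈ closedBall x₀ R := by
    have h1 := mem_ball.mp hx
    exact mem_closedBall.mpr (by linarith)
  have hSx : (∑ j, (x j - x₀ j)^2) ≤ R^2/4 := by
    have hd : (∑ j, (x j - x₀ j)^2) = dist x x₀ ^ 2 := by
      rw [EuclideanSpace.dist_eq, Real.sq_sqrt (by positivity)]
      simp only [Real.dist_eq, sq_abs]
    rw [hd]
    have h1 : dist x x₀ < R / 2 := mem_ball.mp hx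
    have h0 : 0 ≤ dist x x₀ := dist_nonneg
    nlinarith
  have hhx : 1 + (4 / R^2) * ∑ j, (x j - x₀ j)^2 ≤ 2 := by
    have h1 : (4 / R^2) * (∑ j, (x j - x₀ j)^2) ≤ (4 / R^2) * (R^2/4) :=
      mul_le_mul_of_nonneg_left hSx hβ.le
    have h2 : (4 / R^2) * (R^2/4) = 1 := by
      field_simp
    linarith
  have hhx0 : (0:ℝ) ≤ 1 + (4 / R^2) * ∑ j, (x j - x₀ j)^2 := by positivity
  have hwx : (θ₁ * ε / 5 ^ m) * (1 + (4 / R^2) * ∑ j, (x j - x₀ j)^2) ^ m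
      ≤ (θ₁ * ε / 5 ^ m) * 2 ^ m :=
    mul_le_mul_of_nonneg_left (pow_le_pow_left₀ hhx0 hhx m) hA.le
  calc u x ≤ (θ₁ * ε / 5 ^ m) * (1 + (4 / R^2) * ∑ j, (x j - x₀ j)^2) ^ m :=
        hcomp x hxK
    _ ≤ (θ₁ * ε / 5 ^ m) * 2 ^ m := hwx
    _ ≤ 3 * θ₁ * ε * Real.exp (-σ / (4 * sq)) :=
        final_est θ₁ ε sq σ _ m hθ₁ hε0 hsq hσ0 hA hA5 hm1
end

section
/- Let ω: (0,∞) → [0,∞) satisfy ω(r/2) ≤ max{ε/r, ω(r)}^{1+σ} whenever ε/r ∈ (0, ω₀), for fixed σ ∈ (0,1), ω₀ ∈ (0,1/4). Suppose ε ≤ ω₀ and ω(1) ≤ ω₀. Then for every k ∈ ℕ with 2^k ε ≤ ω₀, either ω(2^{−k}) ≤ (2^k ε)^{1+σ} or ω(2^{−k}) ≤ ω(1)^{(1+σ)^k}. -/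
open Real Set Filter

/-- dyadic iteration of the decay inequality
ω(r/2) ≤ max{ε/r, ω(r)}^{1+σ}: for every k with 2^k ε ≤ ω₀, either
ω(2^{−k}) ≤ (2^k ε)^{1+σ} or ω(2^{−k}) ≤ ω(1)^{(1+σ)^k}. -/
theorem statement18
    (σ ω₀ ε : ℝ) (hσ : σ ∈ Ioo (0:ℝ) 1) (hω₀ : ω₀ ∈ Ioo (0:ℝ) (1/4))
    (ω : ℝ → ℝ) (hωnonneg : ∀ r, 0 < r → 0 ≤ ω r)
    (hε : 0 < ε) (hεω₀ : ε ≤ ω₀) (hω1 : ω 1 ≤ ω₀)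
    (hiter : ∀ r : ℝ, 0 < r → ε / r < ω₀ →
        ω (r / 2) ≤ (max (ε / r) (ω r)) ^ ((1:ℝ) + σ)) :
    ∀ k : ℕ, (2:ℝ)^k * ε ≤ ω₀ →
      ω ((1/2 : ℝ)^k) ≤ ((2:ℝ)^k * ε) ^ ((1:ℝ) + σ) ∨
      ω ((1/2 : ℝ)^k) ≤ (ω 1) ^ (((1:ℝ) + σ)^k) := by
  intro k
  induction k with
  | zero =>
    intro _
    right
    simp [Real.rpow_one]
  | succ k ih =>
    intro hk
    have h2 : (2:ℝ)^(k+1) = 2 * 2^k := by ring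
    have h2k : (2:ℝ)^k * ε ≤ ω₀ / 2 := by nlinarith [hk]
    have hklt : (2:ℝ)^k * ε < ω₀ := by linarith [hω₀.1]
    have hA0 : (0:ℝ) < (2:ℝ)^k * ε := by positivity
    have hA1 : (2:ℝ)^k * ε ≤ 1 := by linarith [hω₀.2]
    have hr : (0:ℝ) < (1/2:ℝ)^k := by positivity
    have hεr : ε / (1/2:ℝ)^k = 2^k * ε := by
      rw [one_div, inv_pow, div_inv_eq_mul]; ring
    have h1 := hiter ((1/2:ℝ)^k) hr (by rw [hεr]; exact hklt)
    have hr2 : ((1/2:ℝ)^k) / 2 = (1/2:ℝ)^(k+1) := by ring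
    rw [hr2, hεr] at h1
    have hApow : ((2:ℝ)^k * ε) ^ ((1:ℝ)+σ) ≤ (2:ℝ)^k * ε := by
      have := Real.rpow_le_rpow_of_exponent_ge hA0 hA1 (by linarith [hσ.1] : (1:ℝ) ≤ 1+σ)
      rwa [Real.rpow_one] at this
    have hAle : (2:ℝ)^k * ε ≤ (2:ℝ)^(k+1) * ε := by nlinarith
    have hexp : (0:ℝ) ≤ 1 + σ := by linarith [hσ.1]
    have hAfinal : ((2:ℝ)^k * ε) ^ ((1:ℝ)+σ) ≤ ((2:ℝ)^(k+1) * ε) ^ ((1:ℝ)+σ) :=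
      Real.rpow_le_rpow (le_of_lt hA0) hAle hexp
    rcases ih (le_of_lt hklt) with hIH | hIH
    · left
      have hmax : max ((2:ℝ)^k * ε) (ω ((1/2:ℝ)^k)) = (2:ℝ)^k * ε :=
        max_eq_left (le_trans hIH hApow)
      rw [hmax] at h1
      exact le_trans h1 hAfinal
    · set B := (ω 1) ^ (((1:ℝ)+σ)^k) with hB
      have hB0 : 0 ≤ B := Real.rpow_nonneg (hωnonneg 1 one_pos) _
      rcases le_total ((2:ℝ)^k * ε) B with hAB | hAB
      · right
        have hmax : max ((2:ℝ)^k * ε) (ω ((1/2:ℝ)^k)) ≤ B :=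
          max_le hAB hIH
        have h3 : ω ((1/2:ℝ)^(k+1)) ≤ B ^ ((1:ℝ)+σ) :=
          le_trans h1 (Real.rpow_le_rpow (le_trans (le_of_lt hA0) (le_max_left _ _))
            hmax hexp)
        have hBpow : B ^ ((1:ℝ)+σ) = (ω 1) ^ (((1:ℝ)+σ)^(k+1)) := by
          rw [hB, ← Real.rpow_mul (hωnonneg 1 one_pos), pow_succ]
        rwa [hBpow] at h3
      · left
        have hmax : max ((2:ℝ)^k * ε) (ω ((1/2:ℝ)^k)) ≤ (2:ℝ)^k * ε :=
          max_le le_rfl (le_trans hIH hAB)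
        have h3 : ω ((1/2:ℝ)^(k+1)) ≤ ((2:ℝ)^k * ε) ^ ((1:ℝ)+σ) :=
          le_trans h1 (Real.rpow_le_rpow (le_trans (le_of_lt hA0) (le_max_left _ _))
            hmax hexp)
        exact le_trans h3 hAfinal
end
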